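/- arXiv:2105.01184 — 2 statements merged into one kernel-verified Lean document; each statement's English description precedes it below -/
import Mathlib

section
/- Define the 4-vectors μ = (μ(z))_{z∈T} with μ(z) = W_a^{-1}Σ_{w:A_w=a}U_w(z) for z=(a,b), δ_w = (δ_w(z))_{z∈T} with δ_w(z) = 1(A_w=a)·W_a^{-1}(Û_w(z)−U_w(z)), and δ = Σ_{w=1}^W δ_w. Then Ŷ_ht = μ + δ identically, and under 2^2 split-plot randomization: Cov(μ) = W^{-1}(H∘S_ht), Cov(δ_w) = W^{-2}M_w^{-1}(H_w∘S_w) for each w, Cov(δ) = Σ_{w=1}^W Cov(δ_w) = W^{-1}Ψ, the cross-covariance Cov(μ,δ) = 0, and consequently Cov(Ŷ_ht) = Cov(μ) + Cov(δ). -/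
open Finset Matrix Filter
open scoped Classical BigOperators

noncomputable section

namespace SplitPlotPaper

/-- The set of treatment combinations `T = {0,1} × {0,1}`, a pair of the levels of
factor A and factor B. -/
abbrev T : Type := Bool × Bool

section LS

variable {ι κ γ : Type*} [Fintype ι] [Fintype κ] [DecidableEq κ] [Fintype γ] [DecidableEq γ]

/-- The Gram matrix `Dᵀ Π D` of a (weighted) least-squares problem with design matrix `X`
and weights `π`. -/
def gram (X : Matrix ι κ ℝ) (π : ι → ℝ) : Matrix κ κ ℝ :=
  Matrix.of fun k k' => ∑ i, π i * X i k * X i k'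

/-- The (weighted) least-squares coefficient vector `(DᵀΠD)⁻¹ DᵀΠY`. -/
def lsCoef (X : Matrix ι κ ℝ) (π y : ι → ℝ) : κ → ℝ :=
  (gram X π)⁻¹.mulVec fun k => ∑ i, π i * X i k * y i

/-- Residuals of the (weighted) least-squares fit. -/
def lsResid (X : Matrix ι κ ℝ) (π y : ι → ℝ) (i : ι) : ℝ :=
  y i - ∑ k, X i k * lsCoef X π y k

/-- The cluster-robust covariance matrix
`(DᵀΠD)⁻¹ (Σ_c D_cᵀΠ_c e_c e_cᵀ Π_c D_c) (DᵀΠD)⁻¹` for clustering map `c`. -/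
def clusterCov (X : Matrix ι κ ℝ) (π y : ι → ℝ) (c : ι → γ) : Matrix κ κ ℝ :=
  (gram X π)⁻¹ *
    (Matrix.of fun k k' =>
      ∑ g : γ, (∑ i, if c i = g then π i * X i k * lsResid X π y i else 0) *
        (∑ i, if c i = g then π i * X i k' * lsResid X π y i else 0)) *
    (gram X π)⁻¹

/-- The heteroskedasticity-robust (sandwich) covariance matrix. -/
def hcCov (X : Matrix ι κ ℝ) (π y : ι → ℝ) : Matrix κ κ ℝ :=
  (gram X π)⁻¹ *
    (Matrix.of fun k k' => ∑ i, (π i) ^ 2 * (lsResid X π y i) ^ 2 * X i k * X i k') *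
    (gram X π)⁻¹

end LS

/-- A `2²` split-plot design: `W = W0 + W1` whole-plots, whole-plot `w` containing
`M w = M0 w + M1 w` sub-plots, together with fixed potential outcomes `Y`. -/
structure Design where
  W0 : ℕ
  W1 : ℕ
  hW0 : 2 ≤ W0
  hW1 : 2 ≤ W1
  M0 : Fin (W0 + W1) → ℕ
  M1 : Fin (W0 + W1) → ℕ
  hM0 : ∀ w, 2 ≤ M0 w
  hM1 : ∀ w, 2 ≤ M1 w
  Y : (w : Fin (W0 + W1)) → Fin (M0 w + M1 w) → T → ℝ

namespace Design

variable (d : Design)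

/-- Number of whole-plots. -/
abbrev W : ℕ := d.W0 + d.W1

/-- Size of whole-plot `w`. -/
abbrev M (w : Fin d.W) : ℕ := d.M0 w + d.M1 w

/-- Total number of units. -/
def N : ℕ := ∑ w, d.M w

/-- Number of whole-plots assigned level `a` of factor A. -/
def Wa (a : Bool) : ℕ := if a then d.W1 else d.W0

/-- Number of units of whole-plot `w` assigned level `b` of factor B. -/
def Mb (w : Fin d.W) (b : Bool) : ℕ := if b then d.M1 w else d.M0 w

/-- `p_a = W_a / W`. -/
def p (a : Bool) : ℝ := (d.Wa a : ℝ) / (d.W : ℝ)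

/-- `q_{wb} = M_{wb} / M_w`. -/
def q (w : Fin d.W) (b : Bool) : ℝ := (d.Mb w b : ℝ) / (d.M w : ℝ)

/-- Inclusion probability `p_{ws}(z) = p_a q_{wb}` for `z = (a,b)`. -/
def prob (w : Fin d.W) (z : T) : ℝ := d.p z.1 * d.q w z.2

/-- Whole-plot size factor `α_w = W M_w / N`. -/
def alpha (w : Fin d.W) : ℝ := (d.W : ℝ) * (d.M w : ℝ) / (d.N : ℝ)

/-- An assignment: a level of factor A for each whole-plot and a level of factor B
for each unit. -/
abbrev Assign : Type := (Fin d.W → Bool) × ((w : Fin d.W) → Fin (d.M w) → Bool)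

/-- The set of assignments realizable under split-plot randomization: exactly `W1`
whole-plots receive level 1 of factor A, and exactly `M1 w` units of whole-plot `w`
receive level 1 of factor B.  Split-plot randomization is uniform on this set. -/
def Ω : Finset d.Assign :=
  Finset.univ.filter fun ω =>
    ((Finset.univ.filter fun w => ω.1 w = true).card = d.W1) ∧
    (∀ w, (Finset.univ.filter fun s => ω.2 w s = true).card = d.M1 w)

/-- Design-based expectation: average over the uniform distribution on `Ω`. -/
def expect (f : d.Assign → ℝ) : ℝ := (∑ ω ∈ d.Ω, f ω) / (d.Ω.card : ℝ)

/-- Design-based covariance. -/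
def cov (f g : d.Assign → ℝ) : ℝ :=
  d.expect (fun ω => f ω * g ω) - d.expect f * d.expect g

/-- Conditional expectation given an event `E` on assignments. -/
def cexpect (E : d.Assign → Prop) (f : d.Assign → ℝ) : ℝ :=
  (∑ ω ∈ d.Ω.filter E, f ω) / ((d.Ω.filter E).card : ℝ)

/-- Conditional covariance given an event `E` on assignments. -/
def ccov (E : d.Assign → Prop) (f g : d.Assign → ℝ) : ℝ :=
  d.cexpect E (fun ω => f ω * g ω) - d.cexpect E f * d.cexpect E g

/-- Treatment `Z_{ws} = (A_w, B_{ws})` received by unit `(w,s)`. -/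
def Z (ω : d.Assign) (w : Fin d.W) (s : Fin (d.M w)) : T := (ω.1 w, ω.2 w s)

/-- Observed outcome `Y_{ws} = Y_{ws}(Z_{ws})`. -/
def Yobs (ω : d.Assign) (w : Fin d.W) (s : Fin (d.M w)) : ℝ := d.Y w s (d.Z ω w s)

/-- Horvitz–Thompson estimator `Ŷ_ht(z)`. -/
def Yht (ω : d.Assign) (z : T) : ℝ :=
  (d.N : ℝ)⁻¹ * ∑ w, ∑ s, if d.Z ω w s = z then (d.prob w z)⁻¹ * d.Yobs ω w s else 0

/-- `1̂_ht(z)`: the Horvitz–Thompson estimator of the constant 1. -/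
def oneHt (ω : d.Assign) (z : T) : ℝ :=
  (d.N : ℝ)⁻¹ * ∑ w, ∑ s, if d.Z ω w s = z then (d.prob w z)⁻¹ else 0

/-- Hajek estimator `Ŷ_haj(z) = Ŷ_ht(z)/1̂_ht(z)`. -/
def Yhaj (ω : d.Assign) (z : T) : ℝ := d.Yht ω z / d.oneHt ω z

/-- Sample-mean estimator `Ŷ_sm(z)`. -/
def Ysm (ω : d.Assign) (z : T) : ℝ :=
  (∑ w, ∑ s, if d.Z ω w s = z then d.Yobs ω w s else 0) /
    (∑ w, ∑ s, if d.Z ω w s = z then (1 : ℝ) else 0)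

/-- Whole-plot sample mean `Ŷ_w(z)` (zero when whole-plot `w` has no units under `z`). -/
def Yw (ω : d.Assign) (w : Fin d.W) (z : T) : ℝ :=
  (d.Mb w z.2 : ℝ)⁻¹ * ∑ s, if d.Z ω w s = z then d.Yobs ω w s else 0

/-- Scaled whole-plot sample mean `Û_w(z) = α_w Ŷ_w(z)`. -/
def Uw (ω : d.Assign) (w : Fin d.W) (z : T) : ℝ := d.alpha w * d.Yw ω w z

/-- Finite-population average `Ȳ(z)`. -/
def Ybar (z : T) : ℝ := (d.N : ℝ)⁻¹ * ∑ w, ∑ s, d.Y w s z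

/-- Whole-plot average potential outcome `Ȳ_w(z)`. -/
def Ybarw (w : Fin d.W) (z : T) : ℝ := (d.M w : ℝ)⁻¹ * ∑ s, d.Y w s z

/-- Scaled whole-plot total `U_w(z) = α_w Ȳ_w(z)`. -/
def U (w : Fin d.W) (z : T) : ℝ := d.alpha w * d.Ybarw w z

/-- Between whole-plot covariance `S_ht(z,z')`. -/
def Sht (z z' : T) : ℝ :=
  ((d.W : ℝ) - 1)⁻¹ *
    ∑ w, (d.alpha w * d.Ybarw w z - d.Ybar z) * (d.alpha w * d.Ybarw w z' - d.Ybar z')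

/-- Between whole-plot covariance `S_haj(z,z')`. -/
def Shaj (z z' : T) : ℝ :=
  ((d.W : ℝ) - 1)⁻¹ *
    ∑ w, (d.alpha w) ^ 2 * (d.Ybarw w z - d.Ybar z) * (d.Ybarw w z' - d.Ybar z')

/-- Within whole-plot covariance `S_w(z,z')`. -/
def Sw (w : Fin d.W) (z z' : T) : ℝ :=
  ((d.M w : ℝ) - 1)⁻¹ * (d.alpha w) ^ 2 *
    ∑ s, (d.Y w s z - d.Ybarw w z) * (d.Y w s z' - d.Ybarw w z')

/-- Entry `(z,z')` of `H = diag(p₀⁻¹,p₁⁻¹) ⊗ J₂ − J₄`. -/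
def Hmat (z z' : T) : ℝ := (if z.1 = z'.1 then (d.p z.1)⁻¹ else 0) - 1

/-- Entry `(z,z')` of `H_w = diag(p₀⁻¹,p₁⁻¹) ⊗ (diag(q_{w0}⁻¹,q_{w1}⁻¹) − J₂)`,
i.e. `1(a=a')·p_a⁻¹·(q_{wb}⁻¹·1(z=z') − 1)`. -/
def Hw (w : Fin d.W) (z z' : T) : ℝ :=
  if z.1 = z'.1 then (d.p z.1)⁻¹ * ((if z = z' then (d.q w z.2)⁻¹ else 0) - 1) else 0

/-- `Ψ(z,z') = W⁻¹ Σ_w M_w⁻¹ H_w(z,z') S_w(z,z')`. -/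
def Psi (z z' : T) : ℝ := (d.W : ℝ)⁻¹ * ∑ w, (d.M w : ℝ)⁻¹ * d.Hw w z z' * d.Sw w z z'

/-- Sample analog `Ŝ_ht(z,z')` (for `z,z'` sharing the same A-level `z.1`). -/
def ShtHat (ω : d.Assign) (z z' : T) : ℝ :=
  ((d.Wa z.1 : ℝ) - 1)⁻¹ *
    ∑ w, if ω.1 w = z.1 then
        (d.alpha w * d.Yw ω w z - d.Yht ω z) * (d.alpha w * d.Yw ω w z' - d.Yht ω z')
      else 0

/-- Sample analog `Ŝ_haj(z,z')` (for `z,z'` sharing the same A-level `z.1`). -/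
def ShajHat (ω : d.Assign) (z z' : T) : ℝ :=
  ((d.Wa z.1 : ℝ) - 1)⁻¹ *
    ∑ w, if ω.1 w = z.1 then
        (d.alpha w) ^ 2 * (d.Yw ω w z - d.Yhaj ω z) * (d.Yw ω w z' - d.Yhaj ω z')
      else 0

/-- Covariance estimator `V̂_ht` (block-diagonal in the A-levels). -/
def Vht (ω : d.Assign) : Matrix T T ℝ :=
  Matrix.of fun z z' => if z.1 = z'.1 then (d.Wa z.1 : ℝ)⁻¹ * d.ShtHat ω z z' else 0

/-- Covariance estimator `V̂_haj` (block-diagonal in the A-levels). -/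
def Vhaj (ω : d.Assign) : Matrix T T ℝ :=
  Matrix.of fun z z' => if z.1 = z'.1 then (d.Wa z.1 : ℝ)⁻¹ * d.ShajHat ω z z' else 0

/-- Index set of units. -/
abbrev Idx : Type := (w : Fin d.W) × Fin (d.M w)

/-- Design matrix of the unit regression on the four treatment indicators. -/
def Dunit (ω : d.Assign) : Matrix d.Idx T ℝ :=
  Matrix.of fun i z => if d.Z ω i.1 i.2 = z then 1 else 0

/-- Observed outcome vector, indexed by units. -/
def Yv (ω : d.Assign) : d.Idx → ℝ := fun i => d.Yobs ω i.1 i.2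

/-- Inverse-probability weights `p_{ws}(Z_{ws})⁻¹`. -/
def wgt (ω : d.Assign) : d.Idx → ℝ := fun i => (d.prob i.1 (d.Z ω i.1 i.2))⁻¹

/-- Index set of the aggregate regression: pairs `(w,b)`. -/
abbrev AgIdx : Type := Fin d.W × Bool

/-- Design matrix of the aggregate regression on the four treatment indicators. -/
def Dag (ω : d.Assign) : Matrix d.AgIdx T ℝ :=
  Matrix.of fun i z => if (ω.1 i.1, i.2) = z then 1 else 0

/-- Outcome vector of the aggregate regression: `Û_w((A_w, b))`. -/
def Uag (ω : d.Assign) : d.AgIdx → ℝ := fun i => d.Uw ω i.1 (ω.1 i.1, i.2)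

/-- Clustering of units by whole-plot. -/
def clUnit : d.Idx → Fin d.W := fun i => i.1

/-- Clustering of aggregate observations by whole-plot. -/
def clAg : d.AgIdx → Fin d.W := fun i => i.1

/-- OLS coefficients `β_ols` of the unit regression. -/
def betaOls (ω : d.Assign) : T → ℝ := lsCoef (d.Dunit ω) (fun _ => 1) (d.Yv ω)

/-- WLS coefficients `β_wls` of the unit regression with inverse probability weights. -/
def betaWls (ω : d.Assign) : T → ℝ := lsCoef (d.Dunit ω) (d.wgt ω) (d.Yv ω)

/-- OLS coefficients `β_ag` of the aggregate regression. -/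
def betaAg (ω : d.Assign) : T → ℝ := lsCoef (d.Dag ω) (fun _ => 1) (d.Uag ω)

/-- Cluster-robust covariance `Ṽ_ols` of the unweighted unit regression. -/
def Vols (ω : d.Assign) : Matrix T T ℝ :=
  clusterCov (d.Dunit ω) (fun _ => 1) (d.Yv ω) d.clUnit

/-- Cluster-robust covariance `Ṽ_wls` of the weighted unit regression. -/
def Vwls (ω : d.Assign) : Matrix T T ℝ :=
  clusterCov (d.Dunit ω) (d.wgt ω) (d.Yv ω) d.clUnit

/-- Cluster-robust covariance `Ṽ_ag` of the aggregate regression. -/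
def VagCR (ω : d.Assign) : Matrix T T ℝ :=
  clusterCov (d.Dag ω) (fun _ => 1) (d.Uag ω) d.clAg

section Covariates

variable {J : ℕ}

/-- Horvitz–Thompson estimator of the covariate means. -/
def xht (x : (w : Fin d.W) → Fin (d.M w) → Fin J → ℝ) (ω : d.Assign) (z : T) (j : Fin J) : ℝ :=
  (d.N : ℝ)⁻¹ * ∑ w, ∑ s, if d.Z ω w s = z then (d.prob w z)⁻¹ * x w s j else 0

/-- Hajek estimator of the covariate means. -/
def xhaj (x : (w : Fin d.W) → Fin (d.M w) → Fin J → ℝ) (ω : d.Assign) (z : T) (j : Fin J) : ℝ :=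
  d.xht x ω z j / d.oneHt ω z

/-- Sample-mean estimator of the covariate means. -/
def xsm (x : (w : Fin d.W) → Fin (d.M w) → Fin J → ℝ) (ω : d.Assign) (z : T) (j : Fin J) : ℝ :=
  (∑ w, ∑ s, if d.Z ω w s = z then x w s j else 0) /
    (∑ w, ∑ s, if d.Z ω w s = z then (1 : ℝ) else 0)

/-- Whole-plot sample mean of the covariates `x̂_w(z)`. -/
def xw (x : (w : Fin d.W) → Fin (d.M w) → Fin J → ℝ) (ω : d.Assign) (w : Fin d.W) (z : T)
    (j : Fin J) : ℝ :=
  (d.Mb w z.2 : ℝ)⁻¹ * ∑ s, if d.Z ω w s = z then x w s j else 0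

/-- Scaled whole-plot covariate total `v̂_w(z) = α_w x̂_w(z)`. -/
def vw (x : (w : Fin d.W) → Fin (d.M w) → Fin J → ℝ) (ω : d.Assign) (w : Fin d.W) (z : T)
    (j : Fin J) : ℝ :=
  d.alpha w * d.xw x ω w z j

/-- Design matrix of the additive covariate-adjusted unit regression. -/
def DunitF (x : (w : Fin d.W) → Fin (d.M w) → Fin J → ℝ) (ω : d.Assign) :
    Matrix d.Idx (T ⊕ Fin J) ℝ :=
  Matrix.of fun i k =>
    Sum.elim (fun z => if d.Z ω i.1 i.2 = z then (1 : ℝ) else 0) (fun j => x i.1 i.2 j) k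

/-- Design matrix of the additive covariate-adjusted aggregate regression. -/
def DagF (x : (w : Fin d.W) → Fin (d.M w) → Fin J → ℝ) (ω : d.Assign) :
    Matrix d.AgIdx (T ⊕ Fin J) ℝ :=
  Matrix.of fun i k =>
    Sum.elim (fun z => if (ω.1 i.1, i.2) = z then (1 : ℝ) else 0)
      (fun j => d.vw x ω i.1 (ω.1 i.1, i.2) j) k

/-- Design matrix of the fully-interacted covariate-adjusted unit regression. -/
def DunitL (x : (w : Fin d.W) → Fin (d.M w) → Fin J → ℝ) (ω : d.Assign) :
    Matrix d.Idx (T ⊕ T × Fin J) ℝ :=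
  Matrix.of fun i k =>
    Sum.elim (fun z => if d.Z ω i.1 i.2 = z then (1 : ℝ) else 0)
      (fun zj => if d.Z ω i.1 i.2 = zj.1 then x i.1 i.2 zj.2 else 0) k

/-- Design matrix of the fully-interacted covariate-adjusted aggregate regression. -/
def DagL (x : (w : Fin d.W) → Fin (d.M w) → Fin J → ℝ) (ω : d.Assign) :
    Matrix d.AgIdx (T ⊕ T × Fin J) ℝ :=
  Matrix.of fun i k =>
    Sum.elim (fun z => if (ω.1 i.1, i.2) = z then (1 : ℝ) else 0)
      (fun zj => if (ω.1 i.1, i.2) = zj.1 then d.vw x ω i.1 (ω.1 i.1, i.2) zj.2 else 0) k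

end Covariates

/-- Centered factor-A indicator `A_w − 1/2`. -/
def Ac (ω : d.Assign) (w : Fin d.W) : ℝ := (if ω.1 w then 1 else 0) - 1 / 2

/-- Centered factor-B indicator `B_{ws} − 1/2`. -/
def Bcu (ω : d.Assign) (i : d.Idx) : ℝ := (if ω.2 i.1 i.2 then 1 else 0) - 1 / 2

/-- Design matrix of the factor-based unit regression
`Y ~ 1 + (A−1/2) + (B−1/2) + (A−1/2)(B−1/2)`. -/
def Funit (ω : d.Assign) : Matrix d.Idx (Fin 4) ℝ :=
  Matrix.of fun i => ![1, d.Ac ω i.1, d.Bcu ω i, d.Ac ω i.1 * d.Bcu ω i]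

/-- Design matrix of the factor-based aggregate regression
`Û ~ 1 + (A−1/2) + (b−1/2) + (A−1/2)(b−1/2)`. -/
def Fag (ω : d.Assign) : Matrix d.AgIdx (Fin 4) ℝ :=
  Matrix.of fun i =>
    ![1, d.Ac ω i.1, (if i.2 then 1 else 0) - 1 / 2,
      d.Ac ω i.1 * ((if i.2 then 1 else 0) - 1 / 2)]

end Design

/-- The contrast matrix `G₀` with rows `g_A`, `g_B`, `g_AB`. -/
def G0 : Matrix (Fin 3) T ℝ :=
  Matrix.of fun k z =>
    ![(if z.1 then (1 : ℝ) else -1) / 2,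
      (if z.2 then (1 : ℝ) else -1) / 2,
      (if z.1 then (-1 : ℝ) else 1) * (if z.2 then (-1 : ℝ) else 1)] k


namespace Design

variable (d : Design)

/-- `μ(z) = W_a⁻¹ Σ_{w : A_w = a} U_w(z)` for `z = (a,b)`. -/
def mu (ω : d.Assign) (z : T) : ℝ :=
  (d.Wa z.1 : ℝ)⁻¹ * ∑ w, if ω.1 w = z.1 then d.U w z else 0

/-- `δ_w(z) = 1(A_w = a) · W_a⁻¹ (Û_w(z) − U_w(z))` for `z = (a,b)`. -/
def deltaW (w : Fin d.W) (ω : d.Assign) (z : T) : ℝ :=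
  if ω.1 w = z.1 then (d.Wa z.1 : ℝ)⁻¹ * (d.Uw ω w z - d.U w z) else 0

/-- `δ = Σ_w δ_w`. -/
def delta (ω : d.Assign) (z : T) : ℝ := ∑ w, d.deltaW w ω z

end Design

section Infra
set_option linter.unusedSectionVars false
set_option linter.unreachableTactic false
set_option linter.unusedTactic false
set_option linter.unnecessarySeqFocus false


variable {α : Type*} [Fintype α] [DecidableEq α]

def cset (α : Type*) [Fintype α] (k : ℕ) : Finset (α → Bool) :=
  univ.filter fun f => (univ.filter fun s => f s = true).card = k

lemma mem_cset {k : ℕ} {f : α → Bool} :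
    f ∈ cset α k ↔ (univ.filter fun s => f s = true).card = k := by
  simp [cset]

lemma card_filter_comp (f : α → Bool) (σ : Equiv.Perm α) :
    (univ.filter fun s => f (σ s) = true).card = (univ.filter fun s => f s = true).card := by
  apply Finset.card_equiv σ
  intro s
  simp

lemma comp_mem_cset {k : ℕ} {f : α → Bool} (hf : f ∈ cset α k) (σ : Equiv.Perm α) :
    (f ∘ σ) ∈ cset α k := by
  rw [mem_cset] at hf ⊢
  rw [← hf]
  exact card_filter_comp f σ

lemma sum_cset_comp {M : Type*} [AddCommMonoid M] (k : ℕ) (σ : Equiv.Perm α)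
    (F : (α → Bool) → M) :
    ∑ f ∈ cset α k, F (f ∘ σ) = ∑ f ∈ cset α k, F f := by
  refine Finset.sum_nbij' (fun f => f ∘ σ) (fun f => f ∘ σ.symm) ?_ ?_ ?_ ?_ ?_
  · intro f hf; exact comp_mem_cset hf σ
  · intro f hf; exact comp_mem_cset hf σ.symm
  · intro f _; funext s; simp
  · intro f _; funext s; simp
  · intro f _; rfl

lemma card_cset_filter_single (k : ℕ) (hk : k ≤ Fintype.card α) (s : α) (b : Bool) :
    ((cset α k).filter fun f => f s = b).card * Fintype.card α
      = (cset α k).card * (if b then k else Fintype.card α - k) := by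
  have hsym : ∀ t : α, ((cset α k).filter fun f => f t = true).card
      = ((cset α k).filter fun f => f s = true).card := by
    intro t
    have h := sum_cset_comp (α := α) k (Equiv.swap s t)
      (F := fun f => if f s = true then (1 : ℕ) else 0)
    simp only [Function.comp, Equiv.swap_apply_left] at h
    rw [Finset.card_filter, Finset.card_filter]
    exact h
  have htrue : ((cset α k).filter fun f => f s = true).card * Fintype.card α
      = (cset α k).card * k := by
    have hconst : ∀ f ∈ cset α k, ∑ t : α, (if f t = true then (1 : ℕ) else 0) = k := by
      intro f hf
      rw [← Finset.card_filter]
      exact mem_cset.mp hf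
    have h1 : ∑ t : α, ((cset α k).filter fun f => f t = true).card
        = (cset α k).card * k := by
      calc ∑ t : α, ((cset α k).filter fun f => f t = true).card
          = ∑ t : α, ∑ f ∈ cset α k, (if f t = true then 1 else 0) :=
            Finset.sum_congr rfl fun t _ => Finset.card_filter _ _
        _ = ∑ f ∈ cset α k, ∑ t : α, (if f t = true then 1 else 0) := Finset.sum_comm
        _ = ∑ f ∈ cset α k, k := Finset.sum_congr rfl hconst
        _ = (cset α k).card * k := by rw [Finset.sum_const, smul_eq_mul]
    have h2 : ∑ t : α, ((cset α k).filter fun f => f t = true).card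
        = Fintype.card α * ((cset α k).filter fun f => f s = true).card := by
      rw [Finset.sum_congr rfl (fun t _ => hsym t), Finset.sum_const, smul_eq_mul, card_univ]
    rw [← h1, h2]; ring
  cases b with
  | true => simpa using htrue
  | false =>
    have hfc : ((cset α k).filter fun f => f s = false)
        = ((cset α k).filter fun f => ¬(f s = true)) := by
      apply Finset.filter_congr
      intro f _
      simp
    have hpart : ((cset α k).filter fun f => f s = true).card
        + ((cset α k).filter fun f => f s = false).card = (cset α k).card := by
      rw [hfc]
      exact Finset.card_filter_add_card_filter_not _
    set CT := ((cset α k).filter fun f => f s = true).card with hCT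
    set CF := ((cset α k).filter fun f => f s = false).card with hCF
    set K := (cset α k).card with hK
    set n := Fintype.card α with hn
    clear_value CT CF K n
    have h2 : K * k + K * (n - k) = K * n := by
      rw [← Nat.mul_add, Nat.add_sub_cancel' hk]
    have h3 : K * k + CF * n = K * n := by
      rw [← htrue, ← Nat.add_mul, hpart]
    simp only [if_neg (by simp : ¬(false = true))]
    exact (Nat.add_left_cancel (h3.trans h2.symm)).symm ▸ rfl

lemma card_cset_filter_pair (k : ℕ) (hk1 : 1 ≤ k) (hk2 : k < Fintype.card α)
    {s t : α} (hst : s ≠ t) (b b' : Bool) :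
    ((cset α k).filter fun f => f s = b ∧ f t = b').card
        * (Fintype.card α * (Fintype.card α - 1))
      = (cset α k).card * ((if b then k else Fintype.card α - k) *
          ((if b' then k else Fintype.card α - k) - (if b = b' then 1 else 0))) := by
  set n := Fintype.card α with hn
  have hkn : k ≤ n := le_of_lt hk2
  have hsym : ∀ t' ∈ univ.erase s,
      ((cset α k).filter fun f => f s = b ∧ f t' = true).card
        = ((cset α k).filter fun f => f s = b ∧ f t = true).card := by
    intro t' ht'
    have ht's : t' ≠ s := by simpa using (Finset.mem_erase.mp ht').1
    have hts : t ≠ s := hst.symm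
    have h := sum_cset_comp (α := α) k (Equiv.swap t t')
      (F := fun f => if f s = b ∧ f t' = true then (1 : ℕ) else 0)
    have hσs : Equiv.swap t t' s = s := Equiv.swap_apply_of_ne_of_ne hts.symm ht's.symm
    simp only [Function.comp, Equiv.swap_apply_right, hσs] at h
    rw [Finset.card_filter, Finset.card_filter]
    exact h.symm
  have hcount : ∀ f ∈ cset α k, ∑ t' ∈ univ.erase s,
      (if f s = b ∧ f t' = true then (1 : ℕ) else 0)
      = if f s = b then k - (if b then 1 else 0) else 0 := by
    intro f hf
    by_cases hfs : f s = b
    · have hfull : ∑ t' : α, (if f t' = true then (1 : ℕ) else 0) = k := by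
        rw [← Finset.card_filter]; exact mem_cset.mp hf
      have hsplit : (if f s = true then (1:ℕ) else 0)
          + ∑ x ∈ univ.erase s, (if f x = true then (1:ℕ) else 0) = k := by
        have := Finset.add_sum_erase univ (fun t' => if f t' = true then (1 : ℕ) else 0)
          (Finset.mem_univ s)
        rw [hfull] at this
        exact this
      have hgoal : ∑ t' ∈ univ.erase s, (if f s = b ∧ f t' = true then (1 : ℕ) else 0)
          = ∑ x ∈ univ.erase s, (if f x = true then (1:ℕ) else 0) := by
        refine Finset.sum_congr rfl fun x _ => ?_
        simp [hfs]
      rw [hgoal, if_pos hfs]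
      rw [hfs] at hsplit
      cases b with
      | true => simp at hsplit ⊢; omega
      | false => simp at hsplit ⊢; omega
    · simp [hfs]
  have herase_card : (univ.erase s).card = n - 1 := by
    rw [Finset.card_erase_of_mem (Finset.mem_univ s), card_univ]
  set ib : ℕ := if b then 1 else 0 with hib
  have htrue : ((cset α k).filter fun f => f s = b ∧ f t = true).card * (n - 1)
      = ((cset α k).filter fun f => f s = b).card * (k - ib) := by
    have h1 : ∑ t' ∈ univ.erase s, ((cset α k).filter fun f => f s = b ∧ f t' = true).card
        = ((cset α k).filter fun f => f s = b ∧ f t = true).card * (n - 1) := by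
      rw [Finset.sum_congr rfl hsym, Finset.sum_const, smul_eq_mul, herase_card]
      ring
    have h2 : ∑ t' ∈ univ.erase s, ((cset α k).filter fun f => f s = b ∧ f t' = true).card
        = ((cset α k).filter fun f => f s = b).card * (k - ib) := by
      calc ∑ t' ∈ univ.erase s, ((cset α k).filter fun f => f s = b ∧ f t' = true).card
          = ∑ t' ∈ univ.erase s, ∑ f ∈ cset α k, (if f s = b ∧ f t' = true then 1 else 0) :=
            Finset.sum_congr rfl fun t' _ => Finset.card_filter _ _
        _ = ∑ f ∈ cset α k, ∑ t' ∈ univ.erase s, (if f s = b ∧ f t' = true then 1 else 0) :=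
            Finset.sum_comm
        _ = ∑ f ∈ cset α k, (if f s = b then k - ib else 0) :=
            Finset.sum_congr rfl hcount
        _ = ((cset α k).filter fun f => f s = b).card * (k - ib) := by
            rw [← Finset.sum_filter, Finset.sum_const, smul_eq_mul]
    rw [← h1, h2]
  have hfc : ((cset α k).filter fun f => f s = b ∧ f t = false)
      = (((cset α k).filter fun f => f s = b).filter fun f => ¬(f t = true)) := by
    rw [Finset.filter_filter]
    apply Finset.filter_congr
    intro f _
    simp
  have hfc1 : ((cset α k).filter fun f => f s = b ∧ f t = true)
      = (((cset α k).filter fun f => f s = b).filter fun f => f t = true) := by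
    rw [Finset.filter_filter]
  have hpart : ((cset α k).filter fun f => f s = b ∧ f t = true).card
      + ((cset α k).filter fun f => f s = b ∧ f t = false).card
      = ((cset α k).filter fun f => f s = b).card := by
    rw [hfc, hfc1]
    exact Finset.card_filter_add_card_filter_not _
  have hsingle := card_cset_filter_single (α := α) k hkn s b
  rw [← hn] at hsingle
  set CB := ((cset α k).filter fun f => f s = b).card with hCB
  set CC1 := ((cset α k).filter fun f => f s = b ∧ f t = true).card with hCC1
  set CC0 := ((cset α k).filter fun f => f s = b ∧ f t = false).card with hCC0
  set K := (cset α k).card with hK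
  set mb : ℕ := if b then k else n - k with hmb
  cases b' with
  | true =>
    rw [if_pos (rfl : (true : Bool) = true), ← hib, ← hCC1]
    clear_value CB CC1 CC0 K mb ib n
    have step : CC1 * (n * (n - 1)) = CB * n * (k - ib) := by
      calc CC1 * (n * (n - 1)) = (CC1 * (n - 1)) * n := by ring
        _ = (CB * (k - ib)) * n := by rw [htrue]
        _ = CB * n * (k - ib) := by ring
    rw [step, hsingle]
    ring
  | false =>
    rw [if_neg (by simp : ¬((false : Bool) = true)), ← hCC0]
    clear_value CB CC1 CC0 K mb ib n
    have hp : CC0 + CC1 = CB := (Nat.add_comm CC0 CC1).trans hpart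
    have hB : CC0 * (n-1) * n + CC1 * (n-1) * n = CB * (n-1) * n := by
      rw [← hp]; ring
    rw [htrue] at hB
    have e : K * (mb * (k - ib)) = CB * (k - ib) * n := by
      calc K * (mb * (k - ib)) = (K * mb) * (k - ib) := by ring
        _ = (CB * n) * (k - ib) := by rw [← hsingle]
        _ = CB * (k - ib) * n := by ring
    have e2 : K * (mb * (n - 1)) = CB * (n-1) * n := by
      calc K * (mb * (n - 1)) = (K * mb) * (n - 1) := by ring
        _ = (CB * n) * (n - 1) := by rw [← hsingle]
        _ = CB * (n-1) * n := by ring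
    have hstar : CC0 * (n * (n-1)) + K * (mb * (k - ib)) = K * (mb * (n - 1)) := by
      rw [e, e2, ← hB]
      ring
    have harith : (n - k) - (if b = false then 1 else 0) + (k - ib) = n - 1 := by
      clear hcount hsym hfc hfc1 hCC0 hCC1 hCB hK hsingle htrue hB e e2 hstar hp hpart hmb herase_card hn
      cases b <;> simp [hib] <;> omega
    have hss : K * (mb * ((n - k) - (if b = false then 1 else 0))) + K * (mb * (k - ib))
        = K * (mb * (n - 1)) := by
      rw [← harith]
      ring
    exact Nat.add_right_cancel (hstar.trans hss.symm)

def mbR (n k : ℕ) (b : Bool) : ℝ := if b then (k : ℝ) else (n : ℝ) - (k : ℝ)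

lemma mbR_cast {n k : ℕ} (hk : k ≤ n) (b : Bool) :
    ((if b then k else n - k : ℕ) : ℝ) = mbR n k b := by
  cases b with
  | true => simp [mbR]
  | false => simp [mbR, Nat.cast_sub hk]

lemma mbR_pos {n k : ℕ} (hk1 : 1 ≤ k) (hk2 : k < n) (b : Bool) : (1 : ℝ) ≤ mbR n k b := by
  cases b with
  | true => simp [mbR]; exact_mod_cast hk1
  | false =>
    simp only [mbR, if_neg (by simp : ¬((false : Bool) = true))]
    have : (k : ℝ) + 1 ≤ (n : ℝ) := by exact_mod_cast hk2
    linarith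

lemma srs_sum_single (k : ℕ) (hk : k ≤ Fintype.card α) (hn : 0 < Fintype.card α)
    (s : α) (b : Bool) (c : ℝ) :
    ∑ f ∈ cset α k, (if f s = b then c else 0)
      = (cset α k).card * (mbR (Fintype.card α) k b / Fintype.card α) * c := by
  have hn' : ((Fintype.card α : ℕ) : ℝ) ≠ 0 := Nat.cast_ne_zero.mpr hn.ne'
  have h := card_cset_filter_single (α := α) k hk s b
  have key : (((cset α k).filter fun f => f s = b).card : ℝ)
      = ((cset α k).card : ℝ) * mbR (Fintype.card α) k b / (Fintype.card α : ℝ) := by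
    rw [eq_div_iff hn']
    have h' := congrArg (Nat.cast : ℕ → ℝ) h
    push_cast [Nat.cast_sub hk] at h'
    rw [h']
    cases b with
    | true => simp [mbR]
    | false => simp [mbR]
  calc ∑ f ∈ cset α k, (if f s = b then c else 0)
      = ∑ f ∈ (cset α k).filter fun f => f s = b, c := (Finset.sum_filter _ _).symm
    _ = (((cset α k).filter fun f => f s = b).card : ℝ) * c := by
        rw [Finset.sum_const, nsmul_eq_mul]
    _ = (cset α k).card * (mbR (Fintype.card α) k b / Fintype.card α) * c := by
        rw [key]; ring

lemma srs_sum_vec (k : ℕ) (hk : k ≤ Fintype.card α) (hn : 0 < Fintype.card α)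
    (b : Bool) (x : α → ℝ) :
    ∑ f ∈ cset α k, (∑ s, if f s = b then x s else 0)
      = (cset α k).card * (mbR (Fintype.card α) k b / Fintype.card α) * ∑ s, x s := by
  rw [Finset.sum_comm]
  rw [Finset.sum_congr rfl fun s _ => srs_sum_single k hk hn s b (x s)]
  rw [← Finset.mul_sum]

lemma srs_sum_prod (k : ℕ) (hk1 : 1 ≤ k) (hk2 : k < Fintype.card α)
    (b b' : Bool) (x y : α → ℝ) :
    ∑ f ∈ cset α k,
        (∑ s, if f s = b then x s else 0) * (∑ s, if f s = b' then y s else 0)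
      = (cset α k).card *
          ( ((if b = b' then mbR (Fintype.card α) k b / Fintype.card α else 0)
              - mbR (Fintype.card α) k b * (mbR (Fintype.card α) k b'
                  - if b = b' then 1 else 0) / (Fintype.card α * (Fintype.card α - 1)))
              * (∑ s, x s * y s)
            + (mbR (Fintype.card α) k b * (mbR (Fintype.card α) k b'
                  - if b = b' then 1 else 0) / (Fintype.card α * (Fintype.card α - 1)))
              * ((∑ s, x s) * (∑ s, y s)) ) := by
  set n := Fintype.card α with hn
  have hkn : k ≤ n := le_of_lt hk2
  have hn0 : 0 < n := lt_of_le_of_lt (Nat.zero_le _) hk2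
  have hn' : ((n : ℕ) : ℝ) ≠ 0 := Nat.cast_ne_zero.mpr hn0.ne'
  have hn2 : 2 ≤ n := by omega
  have hn1' : ((n : ℕ) : ℝ) - 1 ≠ 0 := by
    have : (2 : ℝ) ≤ (n : ℝ) := by exact_mod_cast hn2
    intro h; linarith [this]
  set K := ((cset α k).card : ℝ) with hK
  set m1 := mbR n k b with hm1
  set m2 := mbR n k b' with hm2
  set cO : ℝ := m1 * (m2 - if b = b' then 1 else 0) / (n * (n - 1)) with hcO
  set cD : ℝ := (if b = b' then m1 / n else 0) - cO with hcD
  have hpair : ∀ {s t : α}, s ≠ t →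
      ((((cset α k).filter fun f => f s = b ∧ f t = b').card : ℕ) : ℝ) = K * cO := by
    intro s t hst
    have h := card_cset_filter_pair (α := α) k hk1 hk2 hst b b'
    have hle : (if b = b' then 1 else 0 : ℕ) ≤ (if b' then k else n - k) := by
      have h1 : 1 ≤ (if b' then k else n - k) := by
        cases b' with
        | true => simpa using hk1
        | false =>
          simp only [if_neg (by simp : ¬((false : Bool) = true))]
          exact Nat.le_sub_of_add_le (by rw [Nat.add_comm]; exact hk2)
      split
      · exact h1
      · exact Nat.zero_le _
    have hcc : ((((cset α k).filter fun f => f s = b ∧ f t = b').card : ℕ) : ℝ)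
          * ((n : ℝ) * ((n : ℝ) - 1))
        = ((cset α k).card : ℝ) * (m1 * (m2 - if b = b' then 1 else 0)) := by
      have h' := congrArg (Nat.cast : ℕ → ℝ) h
      push_cast [Nat.cast_sub (show (if b = b' then 1 else 0 : ℕ) ≤ (if b' = true then k else Fintype.card α - k) from hle), Nat.cast_sub (show k ≤ Fintype.card α from hn ▸ hkn),
        Nat.cast_sub (show 1 ≤ Fintype.card α from hn ▸ hn0)] at h'
      rw [hm1, hm2]
      unfold mbR
      convert h' using 3 <;> push_cast <;> ring
    have hd : ((n : ℝ) * ((n : ℝ) - 1)) ≠ 0 := mul_ne_zero hn' hn1'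
    have hrw : K * cO = ((cset α k).card : ℝ) * (m1 * (m2 - if b = b' then 1 else 0))
        / ((n : ℝ) * ((n : ℝ) - 1)) := by
      rw [hcO, hK]; ring
    rw [hrw, eq_div_iff hd]
    exact hcc
  have hsingle : ∀ (s : α) (c : ℝ), ∑ f ∈ cset α k, (if f s = b then c else 0)
      = K * (m1 / n) * c := fun s c => srs_sum_single k hkn hn0 s b c
  -- pointwise product rewrite and main per-pair computation
  have key : ∀ s t : α, (∑ f ∈ cset α k,
        (if f s = b then x s else 0) * (if f t = b' then y t else 0))
      = (if s = t then K * ((if b = b' then m1 / n else 0)) else K * cO) * (x s * y t) := by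
    intro s t
    by_cases hst : s = t
    · subst hst
      rw [if_pos rfl]
      by_cases hbb : b = b'
      · subst hbb
        have hpt : ∀ f : α → Bool, (if f s = b then x s else 0) * (if f s = b then y s else 0)
            = if f s = b then x s * y s else 0 := by
          intro f; by_cases hf : f s = b <;> simp [hf]
        rw [Finset.sum_congr rfl fun f _ => hpt f, hsingle s (x s * y s)]
        rw [if_pos rfl] <;> ring
      · have hpt : ∀ f : α → Bool, (if f s = b then x s else 0) * (if f s = b' then y s else 0)
            = 0 := by
          intro f
          by_cases hf : f s = b
          · have hnb : ¬(f s = b') := by rw [hf]; exact fun hc => hbb hc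
            rw [if_pos hf, if_neg hnb, mul_zero]
          · rw [if_neg hf, zero_mul]
        rw [Finset.sum_congr rfl fun f _ => hpt f, Finset.sum_const_zero]
        rw [if_neg hbb] <;> ring
    · have hpt : ∀ f : α → Bool, (if f s = b then x s else 0) * (if f t = b' then y t else 0)
          = if f s = b ∧ f t = b' then x s * y t else 0 := by
        intro f
        by_cases h1 : f s = b <;> by_cases h2 : f t = b' <;> simp [h1, h2]
      rw [Finset.sum_congr rfl fun f _ => hpt f]
      rw [if_neg hst]
      calc ∑ f ∈ cset α k, (if f s = b ∧ f t = b' then x s * y t else 0)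
          = ∑ f ∈ (cset α k).filter fun f => f s = b ∧ f t = b', x s * y t :=
            (Finset.sum_filter _ _).symm
        _ = ((((cset α k).filter fun f => f s = b ∧ f t = b').card : ℕ) : ℝ) * (x s * y t) := by
            rw [Finset.sum_const, nsmul_eq_mul]
        _ = K * cO * (x s * y t) := by rw [hpair hst]
  calc ∑ f ∈ cset α k,
        (∑ s, if f s = b then x s else 0) * (∑ s, if f s = b' then y s else 0)
      = ∑ f ∈ cset α k, ∑ s, ∑ t, (if f s = b then x s else 0) * (if f t = b' then y t else 0) := by
        refine Finset.sum_congr rfl fun f _ => ?_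
        rw [Finset.sum_mul_sum]
    _ = ∑ s, ∑ t, ∑ f ∈ cset α k,
          (if f s = b then x s else 0) * (if f t = b' then y t else 0) := by
        rw [Finset.sum_comm]
        exact Finset.sum_congr rfl fun s _ => Finset.sum_comm
    _ = ∑ s, ∑ t, (if s = t then K * ((if b = b' then m1 / n else 0)) else K * cO) * (x s * y t) :=
        Finset.sum_congr rfl fun s _ => Finset.sum_congr rfl fun t _ => key s t
    _ = ∑ s, ∑ t, (K * cO * (x s * y t)
          + if s = t then (K * ((if b = b' then m1 / n else 0)) - K * cO) * (x s * y t) else 0) := by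
        refine Finset.sum_congr rfl fun s _ => Finset.sum_congr rfl fun t _ => ?_
        by_cases hst : s = t
        · simp only [if_pos hst]
          ring
        · simp only [if_neg hst]
          ring
    _ = (∑ s, ∑ t, K * cO * (x s * y t))
        + ∑ s, ∑ t, (if s = t then (K * ((if b = b' then m1 / n else 0)) - K * cO) * (x s * y t)
            else 0) := by
        rw [← Finset.sum_add_distrib]
        exact Finset.sum_congr rfl fun s _ => Finset.sum_add_distrib
    _ = K * cO * ((∑ s, x s) * (∑ s, y s))
        + (K * ((if b = b' then m1 / n else 0)) - K * cO) * (∑ s, x s * y s) := by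
        congr 1
        · rw [Finset.sum_mul_sum]
          simp only [Finset.mul_sum]
        · have e2 : ∀ s : α, (∑ t, if s = t
              then (K * ((if b = b' then m1 / n else 0)) - K * cO) * (x s * y t) else 0)
              = (K * ((if b = b' then m1 / n else 0)) - K * cO) * (x s * y s) := by
            intro s
            rw [Finset.sum_ite_eq]
            simp
          rw [Finset.sum_congr rfl fun s _ => e2 s, ← Finset.mul_sum]
    _ = K * (cD * (∑ s, x s * y s) + cO * ((∑ s, x s) * (∑ s, y s))) := by
        rw [hcD]; ring

section PiLemmas

variable {ι : Type*} [Fintype ι] [DecidableEq ι] {β : ι → Type*} [∀ i, Fintype (β i)]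
  [∀ i, DecidableEq (β i)]

lemma sum_piFinset_single (t : ∀ i, Finset (β i)) (w : ι) (g : β w → ℝ) :
    ((t w).card : ℝ) * ∑ B ∈ Fintype.piFinset t, g (B w)
      = ((Fintype.piFinset t).card : ℝ) * ∑ x ∈ t w, g x := by
  set φ : ∀ i, β i → ℝ := fun i x => if h : i = w then g (cast (congrArg β h) x) else 1 with hφ
  have hφw : ∀ x : β w, φ w x = g x := by
    intro x
    simp only [hφ, dif_pos rfl, cast_eq]
  have hφi : ∀ (i : ι), i ≠ w → ∀ x : β i, φ i x = 1 := by
    intro i hi x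
    simp only [hφ, dif_neg hi]
  have hprod : ∀ B : ∀ i, β i, (∏ i, φ i (B i)) = g (B w) := by
    intro B
    rw [Finset.prod_eq_single w (fun i _ hi => hφi i hi (B i))
      (fun h => absurd (Finset.mem_univ w) h)]
    exact hφw (B w)
  have hmain := Finset.prod_univ_sum t φ
  rw [Finset.sum_congr rfl (fun B _ => hprod B)] at hmain
  have hL : (∏ i, ∑ x ∈ t i, φ i x)
      = (∑ x ∈ t w, g x) * ∏ i ∈ univ.erase w, ((t i).card : ℝ) := by
    rw [← Finset.mul_prod_erase univ _ (Finset.mem_univ w)]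
    congr 1
    · exact Finset.sum_congr rfl fun x _ => hφw x
    · refine Finset.prod_congr rfl fun i hi => ?_
      have hiw : i ≠ w := (Finset.mem_erase.mp hi).1
      rw [Finset.sum_congr rfl fun x _ => hφi i hiw x, Finset.sum_const, nsmul_eq_mul, mul_one]
  have hcard : ((Fintype.piFinset t).card : ℝ) = ∏ i, ((t i).card : ℝ) := by
    rw [Fintype.card_piFinset]
    push_cast
    rfl
  have hcard2 : (∏ i, ((t i).card : ℝ))
      = ((t w).card : ℝ) * ∏ i ∈ univ.erase w, ((t i).card : ℝ) :=
    (Finset.mul_prod_erase univ _ (Finset.mem_univ w)).symm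
  rw [← hmain, hL, hcard, hcard2]
  ring

lemma sum_piFinset_pair (t : ∀ i, Finset (β i)) {w v : ι} (hwv : w ≠ v)
    (g : β w → ℝ) (h : β v → ℝ) :
    ((t w).card : ℝ) * ((t v).card : ℝ) * ∑ B ∈ Fintype.piFinset t, g (B w) * h (B v)
      = ((Fintype.piFinset t).card : ℝ) * ((∑ x ∈ t w, g x) * (∑ x ∈ t v, h x)) := by
  set φ : ∀ i, β i → ℝ := fun i x =>
    if h1 : i = w then g (cast (congrArg β h1) x)
    else if h2 : i = v then h (cast (congrArg β h2) x) else 1 with hφ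
  have hφw : ∀ x : β w, φ w x = g x := by
    intro x
    simp only [hφ, dif_pos rfl, cast_eq]
  have hφv : ∀ x : β v, φ v x = h x := by
    intro x
    have e : φ v x = if h2 : v = v then h (cast (congrArg β h2) x) else 1 := by
      simp only [hφ]
      rw [dif_neg (Ne.symm hwv)]
    rw [e, dif_pos rfl, cast_eq]
  have hφi : ∀ (i : ι), i ≠ w → i ≠ v → ∀ x : β i, φ i x = 1 := by
    intro i hi1 hi2 x
    simp only [hφ, dif_neg hi1, dif_neg hi2]
  have hvm : v ∈ univ.erase w := Finset.mem_erase.mpr ⟨Ne.symm hwv, Finset.mem_univ v⟩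
  have hprod : ∀ B : ∀ i, β i, (∏ i, φ i (B i)) = g (B w) * h (B v) := by
    intro B
    rw [← Finset.mul_prod_erase univ (fun i => φ i (B i)) (Finset.mem_univ w),
      ← Finset.mul_prod_erase _ _ hvm, hφw, hφv, Finset.prod_eq_one]
    · ring
    · intro i hi
      have h1 : i ≠ v := (Finset.mem_erase.mp hi).1
      have h2 : i ≠ w := (Finset.mem_erase.mp (Finset.mem_erase.mp hi).2).1
      exact hφi i h2 h1 (B i)
  have hmain := Finset.prod_univ_sum t φ
  rw [Finset.sum_congr rfl (fun B _ => hprod B)] at hmain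
  have e1 : ∑ x ∈ t w, φ w x = ∑ x ∈ t w, g x := Finset.sum_congr rfl fun x _ => hφw x
  have e2 : ∑ x ∈ t v, φ v x = ∑ x ∈ t v, h x := Finset.sum_congr rfl fun x _ => hφv x
  have e3 : ∏ i ∈ (univ.erase w).erase v, (∑ x ∈ t i, φ i x)
      = ∏ i ∈ (univ.erase w).erase v, ((t i).card : ℝ) := by
    refine Finset.prod_congr rfl fun i hi => ?_
    have h1 : i ≠ v := (Finset.mem_erase.mp hi).1
    have h2 : i ≠ w := (Finset.mem_erase.mp (Finset.mem_erase.mp hi).2).1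
    rw [Finset.sum_congr rfl fun x _ => hφi i h2 h1 x, Finset.sum_const, nsmul_eq_mul, mul_one]
  have hL : (∏ i, ∑ x ∈ t i, φ i x)
      = (∑ x ∈ t w, g x) * ((∑ x ∈ t v, h x)
          * ∏ i ∈ (univ.erase w).erase v, ((t i).card : ℝ)) := by
    rw [← Finset.mul_prod_erase univ _ (Finset.mem_univ w),
      ← Finset.mul_prod_erase _ _ hvm, e1, e2, e3]
  have hcard : ((Fintype.piFinset t).card : ℝ) = ∏ i, ((t i).card : ℝ) := by
    rw [Fintype.card_piFinset]
    push_cast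
    rfl
  have hcard2 : (∏ i, ((t i).card : ℝ))
      = ((t w).card : ℝ) * (((t v).card : ℝ)
          * ∏ i ∈ (univ.erase w).erase v, ((t i).card : ℝ)) := by
    rw [← Finset.mul_prod_erase univ _ (Finset.mem_univ w), ← Finset.mul_prod_erase _ _ hvm]
  rw [← hmain, hL, hcard, hcard2]
  ring

end PiLemmas


end Infra

section DesignLemmas
set_option linter.unusedSectionVars false

lemma cset_nonempty {α : Type*} [Fintype α] {k : ℕ} (hk : k ≤ Fintype.card α) :
    (cset α k).Nonempty := by
  classical
  obtain ⟨S, -, hS⟩ := Finset.exists_subset_card_eq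
    (show k ≤ (univ : Finset α).card by simpa using hk)
  refine ⟨fun a => a ∈ S, ?_⟩
  rw [mem_cset, ← hS]
  congr 1
  ext a
  simp

namespace Design

variable (d : Design)

lemma hW1a : 1 ≤ d.W1 := le_trans one_le_two d.hW1
lemma hW1b : d.W1 < d.W := by
  have h := d.hW0
  show d.W1 < d.W0 + d.W1
  omega
lemma Wpos : 0 < d.W := lt_of_le_of_lt (Nat.zero_le _) d.hW1b
lemma hM1a (w : Fin d.W) : 1 ≤ d.M1 w := le_trans one_le_two (d.hM1 w)
lemma hM1b (w : Fin d.W) : d.M1 w < d.M w := by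
  have h := d.hM0 w
  show d.M1 w < d.M0 w + d.M1 w
  omega
lemma Mpos (w : Fin d.W) : 0 < d.M w := lt_of_le_of_lt (Nat.zero_le _) (d.hM1b w)
lemma Npos : 0 < d.N := by
  refine Finset.sum_pos (fun w _ => d.Mpos w) ⟨⟨0, d.Wpos⟩, Finset.mem_univ _⟩
lemma Wapos (a : Bool) : 0 < d.Wa a := by
  unfold Design.Wa
  cases a
  · simpa using lt_of_lt_of_le two_pos d.hW0
  · simpa using lt_of_lt_of_le two_pos d.hW1
lemma Mbpos (w : Fin d.W) (b : Bool) : 0 < d.Mb w b := by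
  unfold Design.Mb
  cases b
  · simpa using lt_of_lt_of_le two_pos (d.hM0 w)
  · simpa using lt_of_lt_of_le two_pos (d.hM1 w)

lemma Wne : (d.W : ℝ) ≠ 0 := Nat.cast_ne_zero.mpr d.Wpos.ne'
lemma Wne1 : (d.W : ℝ) - 1 ≠ 0 := by
  have h2 : 2 ≤ d.W := le_trans d.hW1 (by show d.W1 ≤ d.W0 + d.W1; omega)
  have : (2 : ℝ) ≤ (d.W : ℝ) := by exact_mod_cast h2
  intro h
  linarith
lemma Mne (w : Fin d.W) : (d.M w : ℝ) ≠ 0 := Nat.cast_ne_zero.mpr (d.Mpos w).ne'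
lemma Mne1 (w : Fin d.W) : (d.M w : ℝ) - 1 ≠ 0 := by
  have h2 : 2 ≤ d.M w := le_trans (d.hM1 w) (by show d.M1 w ≤ d.M0 w + d.M1 w; omega)
  have : (2 : ℝ) ≤ (d.M w : ℝ) := by exact_mod_cast h2
  intro h
  linarith
lemma Wane (a : Bool) : (d.Wa a : ℝ) ≠ 0 := Nat.cast_ne_zero.mpr (d.Wapos a).ne'
lemma Mbne (w : Fin d.W) (b : Bool) : (d.Mb w b : ℝ) ≠ 0 :=
  Nat.cast_ne_zero.mpr (d.Mbpos w b).ne'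
lemma Nne : (d.N : ℝ) ≠ 0 := Nat.cast_ne_zero.mpr d.Npos.ne'

lemma mbR_Wa (a : Bool) : mbR d.W d.W1 a = (d.Wa a : ℝ) := by
  cases a
  · show (d.W : ℝ) - (d.W1 : ℝ) = (d.W0 : ℝ)
    show ((d.W0 + d.W1 : ℕ) : ℝ) - (d.W1 : ℝ) = (d.W0 : ℝ)
    push_cast
    ring
  · rfl

lemma mbR_Mb (w : Fin d.W) (b : Bool) : mbR (d.M w) (d.M1 w) b = (d.Mb w b : ℝ) := by
  cases b
  · show (d.M w : ℝ) - (d.M1 w : ℝ) = (d.M0 w : ℝ)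
    show ((d.M0 w + d.M1 w : ℕ) : ℝ) - (d.M1 w : ℝ) = (d.M0 w : ℝ)
    push_cast
    ring
  · rfl

/-- The A-stage sample space. -/
def csA : Finset (Fin d.W → Bool) := cset (Fin d.W) d.W1

/-- The B-stage sample space of whole-plot `w`. -/
def csB (w : Fin d.W) : Finset (Fin (d.M w) → Bool) := cset (Fin (d.M w)) (d.M1 w)

/-- The joint B-stage sample space. -/
def piB : Finset (∀ w : Fin d.W, Fin (d.M w) → Bool) := Fintype.piFinset fun w => d.csB w

lemma Omega_eq : d.Ω = d.csA ×ˢ d.piB := by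
  ext ω
  simp only [Design.Ω, Finset.mem_filter, Finset.mem_univ, true_and, Finset.mem_product,
    csA, piB, Fintype.mem_piFinset, csB, mem_cset]

lemma csA_card_pos : 0 < d.csA.card :=
  Finset.card_pos.mpr (cset_nonempty (by simpa using le_of_lt d.hW1b))
lemma csB_card_pos (w : Fin d.W) : 0 < (d.csB w).card :=
  Finset.card_pos.mpr (cset_nonempty (by simpa using le_of_lt (d.hM1b w)))
lemma piB_card_pos : 0 < d.piB.card := by
  unfold piB
  rw [Fintype.card_piFinset]
  exact Finset.prod_pos fun w _ => d.csB_card_pos w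

lemma csA_card_ne : (d.csA.card : ℝ) ≠ 0 := Nat.cast_ne_zero.mpr d.csA_card_pos.ne'
lemma csB_card_ne (w : Fin d.W) : ((d.csB w).card : ℝ) ≠ 0 :=
  Nat.cast_ne_zero.mpr (d.csB_card_pos w).ne'
lemma piB_card_ne : (d.piB.card : ℝ) ≠ 0 := Nat.cast_ne_zero.mpr d.piB_card_pos.ne'

lemma expect_eq (f : d.Assign → ℝ) :
    d.expect f = (∑ A ∈ d.csA, ∑ B ∈ d.piB, f (A, B)) / ((d.csA.card : ℝ) * d.piB.card) := by
  unfold Design.expect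
  rw [Omega_eq, Finset.sum_product, Finset.card_product]
  push_cast
  rfl

lemma expect_factor (f : d.Assign → ℝ) (F : (Fin d.W → Bool) → ℝ)
    (G : (∀ w : Fin d.W, Fin (d.M w) → Bool) → ℝ) (hf : ∀ ω, f ω = F ω.1 * G ω.2) :
    d.expect f = ((∑ A ∈ d.csA, F A) / (d.csA.card : ℝ))
      * ((∑ B ∈ d.piB, G B) / (d.piB.card : ℝ)) := by
  rw [expect_eq]
  have h1 : ∑ A ∈ d.csA, ∑ B ∈ d.piB, f (A, B)
      = (∑ A ∈ d.csA, F A) * (∑ B ∈ d.piB, G B) := by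
    rw [Finset.sum_mul_sum]
    exact Finset.sum_congr rfl fun A _ => Finset.sum_congr rfl fun B _ => hf (A, B)
  rw [h1]
  field_simp

lemma piB_single (w : Fin d.W) (g : (Fin (d.M w) → Bool) → ℝ) :
    (∑ B ∈ d.piB, g (B w)) / (d.piB.card : ℝ)
      = (∑ x ∈ d.csB w, g x) / ((d.csB w).card : ℝ) := by
  have h := sum_piFinset_single (fun w => d.csB w) w g
  rw [div_eq_div_iff d.piB_card_ne (d.csB_card_ne w)]
  show (∑ B ∈ d.piB, g (B w)) * ((d.csB w).card : ℝ)
    = (∑ x ∈ d.csB w, g x) * (d.piB.card : ℝ)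
  calc (∑ B ∈ d.piB, g (B w)) * ((d.csB w).card : ℝ)
      = ((d.csB w).card : ℝ) * ∑ B ∈ Fintype.piFinset (fun w => d.csB w), g (B w) := by
        rw [mul_comm]; rfl
    _ = ((Fintype.piFinset (fun w => d.csB w)).card : ℝ) * ∑ x ∈ d.csB w, g x := h
    _ = (∑ x ∈ d.csB w, g x) * (d.piB.card : ℝ) := by rw [mul_comm]; rfl

lemma piB_pair {w v : Fin d.W} (hwv : w ≠ v) (g : (Fin (d.M w) → Bool) → ℝ)
    (h : (Fin (d.M v) → Bool) → ℝ) :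
    (∑ B ∈ d.piB, g (B w) * h (B v)) / (d.piB.card : ℝ)
      = ((∑ x ∈ d.csB w, g x) / ((d.csB w).card : ℝ))
        * ((∑ x ∈ d.csB v, h x) / ((d.csB v).card : ℝ)) := by
  have hp := sum_piFinset_pair (fun w => d.csB w) hwv g h
  rw [div_mul_div_comm, div_eq_div_iff d.piB_card_ne
    (mul_ne_zero (d.csB_card_ne w) (d.csB_card_ne v))]
  calc (∑ B ∈ d.piB, g (B w) * h (B v)) * (((d.csB w).card : ℝ) * ((d.csB v).card : ℝ))
      = ((d.csB w).card : ℝ) * ((d.csB v).card : ℝ)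
          * ∑ B ∈ Fintype.piFinset (fun w => d.csB w), g (B w) * h (B v) := by
        rw [mul_comm]; rfl
    _ = ((Fintype.piFinset (fun w => d.csB w)).card : ℝ)
          * ((∑ x ∈ d.csB w, g x) * (∑ x ∈ d.csB v, h x)) := hp
    _ = (∑ x ∈ d.csB w, g x) * (∑ x ∈ d.csB v, h x) * (d.piB.card : ℝ) := by
        rw [mul_comm]; rfl

/-- Within-plot HT estimator of `U_w(z)` as a function of the B-stage assignment. -/
def uhat (w : Fin d.W) (z : T) (x : Fin (d.M w) → Bool) : ℝ :=
  d.alpha w * ((d.Mb w z.2 : ℝ)⁻¹ * ∑ s, if x s = z.2 then d.Y w s z else 0)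

lemma Uw_eq {ω : d.Assign} {w : Fin d.W} {z : T} (h : ω.1 w = z.1) :
    d.Uw ω w z = d.uhat w z (ω.2 w) := by
  unfold Design.Uw Design.Yw uhat
  congr 1
  congr 1
  refine Finset.sum_congr rfl fun s _ => ?_
  by_cases h2 : ω.2 w s = z.2
  · have hz : d.Z ω w s = z := by
      unfold Design.Z
      rw [h, h2]
    rw [if_pos hz, if_pos h2]
    unfold Design.Yobs
    rw [hz]
  · have hz : ¬(d.Z ω w s = z) := by
      unfold Design.Z
      intro hc
      exact h2 (congrArg Prod.snd hc)
    rw [if_neg hz, if_neg h2]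

lemma sumY_eq (w : Fin d.W) (z : T) : ∑ s, d.Y w s z = (d.M w : ℝ) * d.Ybarw w z := by
  unfold Design.Ybarw
  rw [← mul_assoc, mul_inv_cancel₀ (d.Mne w), one_mul]

lemma sumU_eq (z : T) : ∑ w, d.U w z = (d.W : ℝ) * d.Ybar z := by
  unfold Design.U Design.Ybar Design.alpha Design.Ybarw
  rw [Finset.mul_sum, Finset.mul_sum]
  refine Finset.sum_congr rfl fun w _ => ?_
  have key : ∀ (wr mr nr s : ℝ), mr ≠ 0 → nr ≠ 0 →
      wr * mr / nr * (mr⁻¹ * s) = wr * (nr⁻¹ * s) := by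
    intros wr mr nr s hm hn
    field_simp
  exact key _ _ _ _ (d.Mne w) d.Nne

lemma wp1 (w : Fin d.W) (z : T) :
    ∑ x ∈ d.csB w, d.uhat w z x = ((d.csB w).card : ℝ) * d.U w z := by
  unfold uhat
  rw [← Finset.mul_sum, ← Finset.mul_sum]
  have hv := srs_sum_vec (α := Fin (d.M w)) (d.M1 w)
    (by simpa using le_of_lt (d.hM1b w)) (by simpa using d.Mpos w) z.2 (fun s => d.Y w s z)
  simp only [Fintype.card_fin] at hv
  rw [show (cset (Fin (d.M w)) (d.M1 w)) = d.csB w from rfl] at hv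
  rw [hv, mbR_Mb, sumY_eq]
  unfold Design.U
  have key : ∀ (a c mb m yb : ℝ), mb ≠ 0 → m ≠ 0 →
      a * (mb⁻¹ * (c * (mb / m) * (m * yb))) = c * (a * yb) := by
    intros a c mb m yb hmb hm
    field_simp
  exact key _ _ _ _ _ (d.Mbne w z.2) (d.Mne w)

lemma Sw_eq (w : Fin d.W) (z z' : T) :
    d.Sw w z z' = ((d.M w : ℝ) - 1)⁻¹ * (d.alpha w) ^ 2 *
      ((∑ s, d.Y w s z * d.Y w s z')
        - (d.M w : ℝ) * (d.Ybarw w z * d.Ybarw w z')) := by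
  unfold Design.Sw
  congr 1
  have e : ∀ s, (d.Y w s z - d.Ybarw w z) * (d.Y w s z' - d.Ybarw w z')
      = d.Y w s z * d.Y w s z' - d.Ybarw w z' * d.Y w s z - d.Ybarw w z * d.Y w s z'
        + d.Ybarw w z * d.Ybarw w z' := fun s => by ring
  rw [Finset.sum_congr rfl fun s _ => e s]
  rw [Finset.sum_add_distrib, Finset.sum_sub_distrib, Finset.sum_sub_distrib,
    ← Finset.mul_sum, ← Finset.mul_sum, Finset.sum_const, sumY_eq, sumY_eq,
    Finset.card_univ, Fintype.card_fin, nsmul_eq_mul]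
  push_cast
  ring

lemma Sht_eq (z z' : T) :
    d.Sht z z' = ((d.W : ℝ) - 1)⁻¹ *
      ((∑ w, d.U w z * d.U w z') - (d.W : ℝ) * (d.Ybar z * d.Ybar z')) := by
  unfold Design.Sht
  congr 1
  have e : ∀ w, (d.alpha w * d.Ybarw w z - d.Ybar z) * (d.alpha w * d.Ybarw w z' - d.Ybar z')
      = d.U w z * d.U w z' - d.Ybar z' * d.U w z - d.Ybar z * d.U w z'
        + d.Ybar z * d.Ybar z' := fun w => by unfold Design.U; ring
  rw [Finset.sum_congr rfl fun w _ => e w]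
  rw [Finset.sum_add_distrib, Finset.sum_sub_distrib, Finset.sum_sub_distrib,
    ← Finset.mul_sum, ← Finset.mul_sum, Finset.sum_const, sumU_eq, sumU_eq,
    Finset.card_univ, Fintype.card_fin, nsmul_eq_mul]
  push_cast
  ring

lemma wp2 (w : Fin d.W) (z z' : T) :
    ∑ x ∈ d.csB w, (d.uhat w z x - d.U w z) * (d.uhat w z' x - d.U w z')
      = ((d.csB w).card : ℝ) *
          (((if z.2 = z'.2 then (d.q w z.2)⁻¹ else 0) - 1) * (d.M w : ℝ)⁻¹ * d.Sw w z z') := by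
  have e : ∀ x, (d.uhat w z x - d.U w z) * (d.uhat w z' x - d.U w z')
      = d.uhat w z x * d.uhat w z' x - d.U w z' * d.uhat w z x - d.U w z * d.uhat w z' x
        + d.U w z * d.U w z' := fun x => by ring
  rw [Finset.sum_congr rfl fun x _ => e x]
  rw [Finset.sum_add_distrib, Finset.sum_sub_distrib, Finset.sum_sub_distrib,
    ← Finset.mul_sum, ← Finset.mul_sum, Finset.sum_const, nsmul_eq_mul, wp1, wp1]
  have e2 : ∀ x, d.uhat w z x * d.uhat w z' x
      = (d.alpha w)^2 * ((d.Mb w z.2 : ℝ)⁻¹ * (d.Mb w z'.2 : ℝ)⁻¹)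
        * ((∑ s, if x s = z.2 then d.Y w s z else 0)
            * (∑ s, if x s = z'.2 then d.Y w s z' else 0)) := fun x => by unfold uhat; ring
  rw [Finset.sum_congr rfl fun x _ => e2 x, ← Finset.mul_sum]
  have hp := srs_sum_prod (α := Fin (d.M w)) (d.M1 w) (d.hM1a w)
    (by simpa using d.hM1b w) z.2 z'.2 (fun s => d.Y w s z) (fun s => d.Y w s z')
  simp only [Fintype.card_fin] at hp
  rw [show cset (Fin (d.M w)) (d.M1 w) = d.csB w from rfl] at hp
  rw [mbR_Mb, mbR_Mb] at hp
  rw [hp, sumY_eq, sumY_eq, Sw_eq]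
  -- now pure algebra
  by_cases h : z.2 = z'.2
  · rw [← h]
    simp only [if_pos rfl, eq_self_iff_true, if_true, ↓reduceIte]
    unfold Design.q Design.U
    have hMb := d.Mbne w z.2
    have hM := d.Mne w
    have hM1 := d.Mne1 w
    generalize hm : (d.M w : ℝ) = m at hp hM hM1 ⊢
    field_simp
    ring
  · simp only [if_neg h]
    unfold Design.U
    have hMb := d.Mbne w z.2
    have hMb' := d.Mbne w z'.2
    have hM := d.Mne w
    have hM1 := d.Mne1 w
    generalize hm : (d.M w : ℝ) = m at hp hM hM1 ⊢
    field_simp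
    ring

/-- `μ` as a function of the A-stage assignment only. -/
def muA (A : Fin d.W → Bool) (z : T) : ℝ :=
  (d.Wa z.1 : ℝ)⁻¹ * ∑ w, if A w = z.1 then d.U w z else 0

lemma mu_eq (ω : d.Assign) (z : T) : d.mu ω z = d.muA ω.1 z := rfl

lemma sumA_mu (z : T) : ∑ A ∈ d.csA, d.muA A z = (d.csA.card : ℝ) * d.Ybar z := by
  unfold muA
  rw [← Finset.mul_sum]
  have hv := srs_sum_vec (α := Fin d.W) d.W1 (by simpa using le_of_lt d.hW1b)
    (by simpa using d.Wpos) z.1 (fun w => d.U w z)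
  simp only [Fintype.card_fin] at hv
  rw [show cset (Fin d.W) d.W1 = d.csA from rfl] at hv
  rw [hv, mbR_Wa, sumU_eq]
  have key : ∀ (wa c wr yb : ℝ), wa ≠ 0 → wr ≠ 0 →
      wa⁻¹ * (c * (wa / wr) * (wr * yb)) = c * yb := by
    intros wa c wr yb h1 h2
    field_simp
  exact key _ _ _ _ (d.Wane z.1) d.Wne

lemma expect_mu (z : T) : d.expect (fun ω => d.mu ω z) = d.Ybar z := by
  rw [d.expect_factor _ (fun A => d.muA A z) (fun _ => 1) (fun ω => by rw [mu_eq]; ring)]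
  rw [sumA_mu, Finset.sum_const, nsmul_eq_mul, mul_one, div_self d.piB_card_ne, mul_one,
    mul_comm, mul_div_assoc, div_self d.csA_card_ne, mul_one]

lemma cov_mu (z z' : T) :
    d.cov (fun ω => d.mu ω z) (fun ω => d.mu ω z')
      = (d.W : ℝ)⁻¹ * (d.Hmat z z' * d.Sht z z') := by
  unfold Design.cov
  rw [expect_mu, expect_mu]
  have hmm : d.expect (fun ω => d.mu ω z * d.mu ω z')
      = (∑ A ∈ d.csA, d.muA A z * d.muA A z') / (d.csA.card : ℝ) := by
    rw [d.expect_factor _ (fun A => d.muA A z * d.muA A z') (fun _ => 1)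
      (fun ω => by rw [mu_eq, mu_eq]; ring)]
    rw [Finset.sum_const, nsmul_eq_mul, mul_one, div_self d.piB_card_ne, mul_one]
  rw [hmm]
  have e : ∀ A, d.muA A z * d.muA A z'
      = ((d.Wa z.1 : ℝ)⁻¹ * (d.Wa z'.1 : ℝ)⁻¹)
        * ((∑ w, if A w = z.1 then d.U w z else 0)
            * (∑ w, if A w = z'.1 then d.U w z' else 0)) := fun A => by unfold muA; ring
  rw [Finset.sum_congr rfl fun A _ => e A, ← Finset.mul_sum]
  have hp := srs_sum_prod (α := Fin d.W) d.W1 d.hW1a (by simpa using d.hW1b)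
    z.1 z'.1 (fun w => d.U w z) (fun w => d.U w z')
  simp only [Fintype.card_fin] at hp
  rw [show cset (Fin d.W) d.W1 = d.csA from rfl] at hp
  rw [mbR_Wa, mbR_Wa] at hp
  rw [hp, sumU_eq, sumU_eq, Sht_eq]
  unfold Design.Hmat Design.p
  have hcA := d.csA_card_ne
  have hWa := d.Wane z.1
  have hWa' := d.Wane z'.1
  have hW := d.Wne
  have hW1 := d.Wne1
  by_cases h : z.1 = z'.1
  · rw [← h]
    simp only [if_pos rfl, eq_self_iff_true, if_true, ↓reduceIte]
    generalize hw : (d.W : ℝ) = wr at hp hW hW1 ⊢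
    field_simp
    ring
  · simp only [if_neg h]
    generalize hw : (d.W : ℝ) = wr at hp hW hW1 ⊢
    field_simp
    ring

lemma Yht_split (ω : d.Assign) (z : T) :
    d.Yht ω z = ∑ w, if ω.1 w = z.1 then (d.Wa z.1 : ℝ)⁻¹ * d.Uw ω w z else 0 := by
  unfold Design.Yht
  rw [Finset.mul_sum]
  refine Finset.sum_congr rfl fun w _ => ?_
  by_cases hA : ω.1 w = z.1
  · rw [if_pos hA]
    have hs : ∀ s, (if d.Z ω w s = z then (d.prob w z)⁻¹ * d.Yobs ω w s else 0)
        = (d.prob w z)⁻¹ * (if ω.2 w s = z.2 then d.Y w s z else 0) := by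
      intro s
      by_cases h2 : ω.2 w s = z.2
      · have hz : d.Z ω w s = z := by
          unfold Design.Z
          rw [hA, h2]
        rw [if_pos hz, if_pos h2]
        unfold Design.Yobs
        rw [hz]
      · have hz : ¬(d.Z ω w s = z) := by
          unfold Design.Z
          intro hc
          exact h2 (congrArg Prod.snd hc)
        rw [if_neg hz, if_neg h2, mul_zero]
    rw [Finset.sum_congr rfl fun s _ => hs s, ← Finset.mul_sum, d.Uw_eq hA]
    unfold uhat Design.prob Design.p Design.q Design.alpha
    rw [mul_inv, inv_div, inv_div]
    ring
  · rw [if_neg hA]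
    have hs : ∀ s, (if d.Z ω w s = z then (d.prob w z)⁻¹ * d.Yobs ω w s else 0) = 0 := by
      intro s
      rw [if_neg]
      intro hc
      exact hA (congrArg Prod.fst hc)
    rw [Finset.sum_congr rfl fun s _ => hs s, Finset.sum_const_zero, mul_zero]

lemma decomposition (ω : d.Assign) (z : T) : d.Yht ω z = d.mu ω z + d.delta ω z := by
  rw [Yht_split]
  unfold Design.mu Design.delta Design.deltaW
  rw [Finset.mul_sum, ← Finset.sum_add_distrib]
  refine Finset.sum_congr rfl fun w _ => ?_
  by_cases hA : ω.1 w = z.1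
  · rw [if_pos hA, if_pos hA, if_pos hA]
    ring
  · rw [if_neg hA, if_neg hA, if_neg hA]
    ring

lemma deltaW_eq (w : Fin d.W) (ω : d.Assign) (z : T) :
    d.deltaW w ω z = (if ω.1 w = z.1 then (1 : ℝ) else 0)
      * ((d.Wa z.1 : ℝ)⁻¹ * (d.uhat w z (ω.2 w) - d.U w z)) := by
  unfold Design.deltaW
  by_cases hA : ω.1 w = z.1
  · rw [if_pos hA, if_pos hA, d.Uw_eq hA, one_mul]
  · rw [if_neg hA, if_neg hA, zero_mul]

lemma sumB_D (w : Fin d.W) (z : T) :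
    ∑ x ∈ d.csB w, (d.uhat w z x - d.U w z) = 0 := by
  rw [Finset.sum_sub_distrib, wp1, Finset.sum_const, nsmul_eq_mul, sub_self]

lemma sumA_ind (w : Fin d.W) (a : Bool) :
    ∑ A ∈ d.csA, (if A w = a then (1 : ℝ) else 0)
      = (d.csA.card : ℝ) * ((d.Wa a : ℝ) / (d.W : ℝ)) := by
  have hv := srs_sum_single (α := Fin d.W) d.W1 (by simpa using le_of_lt d.hW1b)
    (by simpa using d.Wpos) w a 1
  simp only [Fintype.card_fin] at hv
  rw [show cset (Fin d.W) d.W1 = d.csA from rfl] at hv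
  rw [hv, mbR_Wa, mul_one]

lemma sumA_ind2 (w : Fin d.W) (z z' : T) :
    ∑ A ∈ d.csA, (if A w = z.1 then (1 : ℝ) else 0) * (if A w = z'.1 then 1 else 0)
      = (d.csA.card : ℝ) * (if z.1 = z'.1 then (d.Wa z.1 : ℝ) / (d.W : ℝ) else 0) := by
  by_cases hz : z.1 = z'.1
  · rw [if_pos hz, ← hz]
    have e : ∀ A : Fin d.W → Bool, (if A w = z.1 then (1 : ℝ) else 0)
        * (if A w = z.1 then (1 : ℝ) else 0) = (if A w = z.1 then (1 : ℝ) else 0) := by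
      intro A
      by_cases hA : A w = z.1
      · rw [if_pos hA, mul_one]
      · rw [if_neg hA, mul_zero]
    rw [Finset.sum_congr rfl fun A _ => e A, sumA_ind]
  · rw [if_neg hz]
    have e : ∀ A : Fin d.W → Bool, (if A w = z.1 then (1 : ℝ) else 0)
        * (if A w = z'.1 then (1 : ℝ) else 0) = 0 := by
      intro A
      by_cases hA : A w = z.1
      · have : ¬(A w = z'.1) := by rw [hA]; exact fun hc => hz hc
        rw [if_neg this, mul_zero]
      · rw [if_neg hA, zero_mul]
    rw [Finset.sum_congr rfl fun A _ => e A, Finset.sum_const_zero, mul_zero]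

lemma expect_deltaW (w : Fin d.W) (z : T) : d.expect (fun ω => d.deltaW w ω z) = 0 := by
  rw [d.expect_factor _ (fun A => if A w = z.1 then (1 : ℝ) else 0)
    (fun B => (d.Wa z.1 : ℝ)⁻¹ * (d.uhat w z (B w) - d.U w z)) (fun ω => deltaW_eq d w ω z)]
  have h2 : (∑ B ∈ d.piB, (d.Wa z.1 : ℝ)⁻¹ * (d.uhat w z (B w) - d.U w z))
      / (d.piB.card : ℝ) = 0 := by
    rw [d.piB_single w (fun x => (d.Wa z.1 : ℝ)⁻¹ * (d.uhat w z x - d.U w z))]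
    rw [← Finset.mul_sum, sumB_D, mul_zero, zero_div]
  rw [h2, mul_zero]

lemma cov_deltaW (w : Fin d.W) (z z' : T) :
    d.cov (fun ω => d.deltaW w ω z) (fun ω => d.deltaW w ω z')
      = (d.W : ℝ)⁻¹ * (d.W : ℝ)⁻¹ * (d.M w : ℝ)⁻¹ * (d.Hw w z z' * d.Sw w z z') := by
  unfold Design.cov
  rw [expect_deltaW, expect_deltaW, mul_zero, sub_zero]
  rw [d.expect_factor _
    (fun A => (if A w = z.1 then (1 : ℝ) else 0) * (if A w = z'.1 then 1 else 0))
    (fun B => ((d.Wa z.1 : ℝ)⁻¹ * (d.Wa z'.1 : ℝ)⁻¹)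
      * ((d.uhat w z (B w) - d.U w z) * (d.uhat w z' (B w) - d.U w z')))
    (fun ω => by
      show d.deltaW w ω z * d.deltaW w ω z' = _
      rw [deltaW_eq, deltaW_eq]
      ring)]
  rw [sumA_ind2, mul_comm ((d.csA.card : ℝ)) _, mul_div_assoc, div_self d.csA_card_ne, mul_one]
  have hB : (∑ B ∈ d.piB, ((d.Wa z.1 : ℝ)⁻¹ * (d.Wa z'.1 : ℝ)⁻¹)
        * ((d.uhat w z (B w) - d.U w z) * (d.uhat w z' (B w) - d.U w z')))
      / (d.piB.card : ℝ)
      = ((d.Wa z.1 : ℝ)⁻¹ * (d.Wa z'.1 : ℝ)⁻¹)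
        * (((if z.2 = z'.2 then (d.q w z.2)⁻¹ else 0) - 1) * (d.M w : ℝ)⁻¹ * d.Sw w z z') := by
    rw [d.piB_single w (fun x => ((d.Wa z.1 : ℝ)⁻¹ * (d.Wa z'.1 : ℝ)⁻¹)
      * ((d.uhat w z x - d.U w z) * (d.uhat w z' x - d.U w z')))]
    rw [← Finset.mul_sum, wp2, mul_div_assoc]
    rw [mul_comm ((((d.csB w).card : ℕ) : ℝ)) _, mul_div_assoc, div_self (d.csB_card_ne w),
      mul_one]
  rw [hB]
  unfold Design.Hw Design.p Design.q
  have hWa := d.Wane z.1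
  have hW := d.Wne
  have hM := d.Mne w
  have hMb := d.Mbne w z.2
  by_cases h1 : z.1 = z'.1
  · rw [← h1]
    simp only [if_pos rfl, eq_self_iff_true, if_true, ↓reduceIte]
    by_cases h2 : z.2 = z'.2
    · have hzz : z = z' := Prod.ext h1 h2
      simp only [if_pos h2, if_pos hzz]
      generalize hw : (d.W : ℝ) = wr at hW ⊢
      generalize hm : (d.M w : ℝ) = m at hM ⊢
      field_simp
    · have hzz : ¬(z = z') := fun hc => h2 (congrArg Prod.snd hc)
      simp only [if_neg h2, if_neg hzz]
      generalize hw : (d.W : ℝ) = wr at hW ⊢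
      generalize hm : (d.M w : ℝ) = m at hM ⊢
      field_simp
  · simp only [if_neg h1]
    ring

lemma cov_deltaW_ne {w v : Fin d.W} (hwv : w ≠ v) (z z' : T) :
    d.cov (fun ω => d.deltaW w ω z) (fun ω => d.deltaW v ω z') = 0 := by
  unfold Design.cov
  rw [expect_deltaW, expect_deltaW, mul_zero, sub_zero]
  rw [d.expect_factor _
    (fun A => (if A w = z.1 then (1 : ℝ) else 0) * (if A v = z'.1 then 1 else 0))
    (fun B => ((d.Wa z.1 : ℝ)⁻¹ * (d.uhat w z (B w) - d.U w z))
      * ((d.Wa z'.1 : ℝ)⁻¹ * (d.uhat v z' (B v) - d.U v z')))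
    (fun ω => by
      show d.deltaW w ω z * d.deltaW v ω z' = _
      rw [deltaW_eq, deltaW_eq]
      ring)]
  have hB : (∑ B ∈ d.piB, ((d.Wa z.1 : ℝ)⁻¹ * (d.uhat w z (B w) - d.U w z))
        * ((d.Wa z'.1 : ℝ)⁻¹ * (d.uhat v z' (B v) - d.U v z'))) / (d.piB.card : ℝ) = 0 := by
    rw [d.piB_pair hwv (fun x => (d.Wa z.1 : ℝ)⁻¹ * (d.uhat w z x - d.U w z))
      (fun x => (d.Wa z'.1 : ℝ)⁻¹ * (d.uhat v z' x - d.U v z'))]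
    rw [← Finset.mul_sum, sumB_D, mul_zero, zero_div, zero_mul]
  rw [hB, mul_zero]

lemma expect_add (f g : d.Assign → ℝ) :
    d.expect (fun ω => f ω + g ω) = d.expect f + d.expect g := by
  unfold Design.expect
  rw [Finset.sum_add_distrib, add_div]

lemma expect_sum (f : Fin d.W → d.Assign → ℝ) :
    d.expect (fun ω => ∑ w, f w ω) = ∑ w, d.expect (f w) := by
  unfold Design.expect
  rw [Finset.sum_comm, Finset.sum_div]

lemma cov_comm (f g : d.Assign → ℝ) : d.cov f g = d.cov g f := by
  unfold Design.cov
  rw [show (fun ω => f ω * g ω) = fun ω => g ω * f ω from funext fun ω => mul_comm _ _]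
  ring

lemma cov_sum_right (f : d.Assign → ℝ) (g : Fin d.W → d.Assign → ℝ) :
    d.cov f (fun ω => ∑ w, g w ω) = ∑ w, d.cov f (g w) := by
  unfold Design.cov
  rw [show (fun ω => f ω * ∑ w, g w ω) = fun ω => ∑ w, f ω * g w ω from
    funext fun ω => Finset.mul_sum _ _ _]
  rw [expect_sum d fun w ω => f ω * g w ω, expect_sum d g, Finset.mul_sum,
    ← Finset.sum_sub_distrib]

lemma cov_sum_left (f : Fin d.W → d.Assign → ℝ) (g : d.Assign → ℝ) :
    d.cov (fun ω => ∑ w, f w ω) g = ∑ w, d.cov (f w) g := by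
  rw [cov_comm, cov_sum_right]
  exact Finset.sum_congr rfl fun w _ => cov_comm d _ _

lemma cov_delta_sum (z z' : T) :
    d.cov (fun ω => d.delta ω z) (fun ω => d.delta ω z')
      = ∑ w, d.cov (fun ω => d.deltaW w ω z) (fun ω => d.deltaW w ω z') := by
  unfold Design.delta
  rw [cov_sum_left]
  refine Finset.sum_congr rfl fun w _ => ?_
  rw [cov_sum_right]
  rw [Finset.sum_eq_single w (fun v _ hvw => cov_deltaW_ne d (Ne.symm hvw) z z')
    (fun h => absurd (Finset.mem_univ w) h)]

lemma cov_delta_psi (z z' : T) :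
    d.cov (fun ω => d.delta ω z) (fun ω => d.delta ω z') = (d.W : ℝ)⁻¹ * d.Psi z z' := by
  rw [cov_delta_sum, Finset.sum_congr rfl fun w _ => cov_deltaW d w z z']
  unfold Design.Psi
  rw [Finset.mul_sum, Finset.mul_sum]
  exact Finset.sum_congr rfl fun w _ => by ring

lemma cov_mu_deltaW (v : Fin d.W) (z z' : T) :
    d.cov (fun ω => d.mu ω z) (fun ω => d.deltaW v ω z') = 0 := by
  unfold Design.cov
  rw [expect_deltaW, mul_zero, sub_zero]
  rw [d.expect_factor _
    (fun A => d.muA A z * (if A v = z'.1 then (1 : ℝ) else 0))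
    (fun B => (d.Wa z'.1 : ℝ)⁻¹ * (d.uhat v z' (B v) - d.U v z'))
    (fun ω => by
      show d.mu ω z * d.deltaW v ω z' = _
      rw [mu_eq, deltaW_eq]
      ring)]
  have hB : (∑ B ∈ d.piB, (d.Wa z'.1 : ℝ)⁻¹ * (d.uhat v z' (B v) - d.U v z'))
      / (d.piB.card : ℝ) = 0 := by
    rw [d.piB_single v (fun x => (d.Wa z'.1 : ℝ)⁻¹ * (d.uhat v z' x - d.U v z'))]
    rw [← Finset.mul_sum, sumB_D, mul_zero, zero_div]
  rw [hB, mul_zero]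

lemma cov_mu_delta (z z' : T) :
    d.cov (fun ω => d.mu ω z) (fun ω => d.delta ω z') = 0 := by
  unfold Design.delta
  rw [cov_sum_right, Finset.sum_congr rfl fun v _ => cov_mu_deltaW d v z z',
    Finset.sum_const, smul_zero]

lemma cov_yht (z z' : T) :
    d.cov (fun ω => d.Yht ω z) (fun ω => d.Yht ω z')
      = d.cov (fun ω => d.mu ω z) (fun ω => d.mu ω z')
        + d.cov (fun ω => d.delta ω z) (fun ω => d.delta ω z') := by
  rw [show (fun ω => d.Yht ω z) = fun ω => d.mu ω z + d.delta ω z from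
    funext fun ω => decomposition d ω z]
  rw [show (fun ω => d.Yht ω z') = fun ω => d.mu ω z' + d.delta ω z' from
    funext fun ω => decomposition d ω z']
  have hexp : ∀ f g h k : d.Assign → ℝ,
      d.cov (fun ω => f ω + g ω) (fun ω => h ω + k ω)
        = d.cov f h + d.cov f k + d.cov g h + d.cov g k := by
    intro f g h k
    unfold Design.cov
    rw [show (fun ω => (f ω + g ω) * (h ω + k ω))
        = fun ω => f ω * h ω + (f ω * k ω + (g ω * h ω + g ω * k ω)) from
      funext fun ω => by ring]
    rw [expect_add, expect_add, expect_add, expect_add d f g, expect_add d h k]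
    ring
  rw [hexp, cov_mu_delta, cov_comm d (fun ω => d.delta ω z) (fun ω => d.mu ω z'),
    cov_mu_delta, add_zero, add_zero]

end Design
end DesignLemmas


/-- The decomposition `Ŷ_ht = μ + δ`, and under 2² split-plot
randomization: `Cov(μ) = W⁻¹ (H∘S_ht)`, `Cov(δ_w) = W⁻² M_w⁻¹ (H_w∘S_w)`,
`Cov(δ) = Σ_w Cov(δ_w) = W⁻¹ Ψ`, `Cov(μ,δ) = 0`, and consequently
`Cov(Ŷ_ht) = Cov(μ) + Cov(δ)` (all stated entrywise). -/
theorem yht_decomposition (d : Design) :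
    (∀ ω ∈ d.Ω, ∀ z : T, d.Yht ω z = d.mu ω z + d.delta ω z) ∧
    (∀ z z' : T, d.cov (fun ω => d.mu ω z) (fun ω => d.mu ω z')
        = (d.W : ℝ)⁻¹ * (d.Hmat z z' * d.Sht z z')) ∧
    (∀ (w : Fin d.W) (z z' : T),
        d.cov (fun ω => d.deltaW w ω z) (fun ω => d.deltaW w ω z')
          = (d.W : ℝ)⁻¹ * (d.W : ℝ)⁻¹ * (d.M w : ℝ)⁻¹ * (d.Hw w z z' * d.Sw w z z')) ∧
    (∀ z z' : T, d.cov (fun ω => d.delta ω z) (fun ω => d.delta ω z')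
        = ∑ w, d.cov (fun ω => d.deltaW w ω z) (fun ω => d.deltaW w ω z')) ∧
    (∀ z z' : T, d.cov (fun ω => d.delta ω z) (fun ω => d.delta ω z')
        = (d.W : ℝ)⁻¹ * d.Psi z z') ∧
    (∀ z z' : T, d.cov (fun ω => d.mu ω z) (fun ω => d.delta ω z') = 0) ∧
    (∀ z z' : T, d.cov (fun ω => d.Yht ω z) (fun ω => d.Yht ω z')
        = d.cov (fun ω => d.mu ω z) (fun ω => d.mu ω z')
          + d.cov (fun ω => d.delta ω z) (fun ω => d.delta ω z')) :=
  ⟨fun ω _ z => d.decomposition ω z,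
   fun z z' => d.cov_mu z z',
   fun w z z' => d.cov_deltaW w z z',
   fun z z' => d.cov_delta_sum z z',
   fun z z' => d.cov_delta_psi z z',
   fun z z' => d.cov_mu_delta z z',
   fun z z' => d.cov_yht z z'⟩

end SplitPlotPaper
end
end

section
/- For every realization of the 2^2 split-plot assignment, the three least-squares coefficient vectors equal the three design-based estimators: β_ols = Ŷ_sm, β_wls = Ŷ_haj, and β_ag = Ŷ_ht (componentwise over z∈T). -/
open Finset Matrix Filter
open scoped Classical BigOperators

noncomputable section

namespace SplitPlotPaper

lemma gram_indicator {ι κ : Type*} [Fintype ι] [Fintype κ] [DecidableEq κ]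
    (f : ι → κ) (π : ι → ℝ) :
    gram (Matrix.of fun i k => if f i = k then (1:ℝ) else 0) π
      = Matrix.diagonal (fun k => ∑ i, if f i = k then π i else 0) := by
  ext k k'
  by_cases h : k = k'
  · subst h
    rw [Matrix.diagonal_apply_eq]
    simp only [gram, Matrix.of_apply]
    apply Finset.sum_congr rfl
    intro i _
    by_cases hf : f i = k <;> simp [hf]
  · rw [Matrix.diagonal_apply_ne _ h]
    simp only [gram, Matrix.of_apply]
    apply Finset.sum_eq_zero
    intro i _
    by_cases hf : f i = k
    · rw [if_neg (fun hf' => h (hf ▸ hf'))]; ring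
    · rw [if_neg hf]; ring

lemma lsCoef_indicator {ι κ : Type*} [Fintype ι] [Fintype κ] [DecidableEq κ]
    (f : ι → κ) (π y : ι → ℝ) (h : ∀ k, (∑ i, if f i = k then π i else 0) ≠ 0) (k : κ) :
    lsCoef (Matrix.of fun i k => if f i = k then (1:ℝ) else 0) π y k
      = (∑ i, if f i = k then π i else 0)⁻¹ * ∑ i, if f i = k then π i * y i else 0 := by
  have hinv : (Matrix.diagonal fun k => ∑ i, if f i = k then π i else 0)⁻¹
      = Matrix.diagonal (fun k => (∑ i, if f i = k then π i else 0)⁻¹) := by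
    apply Matrix.inv_eq_right_inv
    rw [Matrix.diagonal_mul_diagonal]
    convert Matrix.diagonal_one using 2
    funext k'
    exact mul_inv_cancel₀ (h k')
  rw [lsCoef, gram_indicator, hinv, Matrix.mulVec_diagonal]
  congr 1
  apply Finset.sum_congr rfl
  intro i _
  by_cases hf : f i = k <;> simp [hf]

/-- For every realization of the 2² split-plot assignment, the three
least-squares coefficient vectors equal the three design-based estimators:
`β_ols = Ŷ_sm`, `β_wls = Ŷ_haj`, and `β_ag = Ŷ_ht` (componentwise over `z ∈ T`). -/
theorem regression_equals_design_estimators (d : Design) :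
    ∀ ω ∈ d.Ω, ∀ z : T,
      d.betaOls ω z = d.Ysm ω z ∧ d.betaWls ω z = d.Yhaj ω z ∧
      d.betaAg ω z = d.Yht ω z := by
  intro ω hω z
  simp only [Design.Ω, Finset.mem_filter] at hω
  obtain ⟨-, hA, hB⟩ := hω
  -- counting facts
  have hcardA : ∀ a : Bool, (Finset.univ.filter fun w => ω.1 w = a).card = d.Wa a := by
    intro a
    cases a
    · have h2 := Finset.card_filter_add_card_filter_not
        (s := (Finset.univ : Finset (Fin d.W))) (fun w => ω.1 w = true)
      have h3 : (Finset.univ.filter fun w : Fin d.W => ¬ ω.1 w = true)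
          = (Finset.univ.filter fun w => ω.1 w = false) := by
        apply Finset.filter_congr; intro w _; simp
      rw [h3, Finset.card_univ] at h2
      have hW : Fintype.card (Fin d.W) = d.W0 + d.W1 := Fintype.card_fin _
      simp only [Design.Wa, if_neg (Bool.false_ne_true)]
      omega
    · exact hA
  have hcardB : ∀ (w : Fin d.W) (b : Bool),
      (Finset.univ.filter fun s => ω.2 w s = b).card = d.Mb w b := by
    intro w b
    cases b
    · have h2 := Finset.card_filter_add_card_filter_not
        (s := (Finset.univ : Finset (Fin (d.M w)))) (fun s => ω.2 w s = true)
      have h3 : (Finset.univ.filter fun s : Fin (d.M w) => ¬ ω.2 w s = true)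
          = (Finset.univ.filter fun s => ω.2 w s = false) := by
        apply Finset.filter_congr; intro s _; simp
      rw [h3, Finset.card_univ] at h2
      have hBw := hB w
      have hM : Fintype.card (Fin (d.M w)) = d.M0 w + d.M1 w := Fintype.card_fin _
      simp only [Design.Mb, if_neg (Bool.false_ne_true)]
      omega
    · exact hB w
  have hWa_pos : ∀ a : Bool, 0 < d.Wa a := by
    intro a; cases a <;> simp [Design.Wa] <;> [exact lt_of_lt_of_le two_pos d.hW0;
      exact lt_of_lt_of_le two_pos d.hW1]
  have hMb_pos : ∀ (w : Fin d.W) (b : Bool), 0 < d.Mb w b := by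
    intro w b; cases b <;> simp [Design.Mb] <;> [exact lt_of_lt_of_le two_pos (d.hM0 w);
      exact lt_of_lt_of_le two_pos (d.hM1 w)]
  have hW_pos : (0:ℝ) < (d.W : ℝ) := by
    have : 0 < d.W := by have := d.hW0; have := d.hW1; simp [Design.W]; omega
    exact_mod_cast this
  have hM_pos : ∀ w : Fin d.W, (0:ℝ) < (d.M w : ℝ) := by
    intro w
    have : 0 < d.M w := by have := d.hM0 w; simp [Design.M]; omega
    exact_mod_cast this
  have hN_pos : (0:ℝ) < (d.N : ℝ) := by
    have : 0 < d.N := by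
      rw [Design.N]
      have hh : 0 < d.W := by have := d.hW0; have := d.hW1; simp only [Design.W]; omega
      haveI : Nonempty (Fin d.W) := ⟨⟨0, hh⟩⟩
      apply Finset.sum_pos
      · intro w _; have := d.hM0 w; simp only [Design.M]; omega
      · exact Finset.univ_nonempty
    exact_mod_cast this
  have hWaR : ∀ a : Bool, (0:ℝ) < (d.Wa a : ℝ) := fun a => by exact_mod_cast hWa_pos a
  have hMbR : ∀ (w : Fin d.W) (b : Bool), (0:ℝ) < (d.Mb w b : ℝ) :=
    fun w b => by exact_mod_cast hMb_pos w b
  have hprob : ∀ (w : Fin d.W) (k : T), 0 < d.prob w k := by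
    intro w k
    exact mul_pos (div_pos (hWaR k.1) hW_pos) (div_pos (hMbR w k.2) (hM_pos w))
  have hexW : ∀ a : Bool, ∃ w, ω.1 w = a := by
    intro a
    have hpos : 0 < (Finset.univ.filter fun w => ω.1 w = a).card := by
      rw [hcardA a]; exact hWa_pos a
    obtain ⟨w, hw⟩ := Finset.card_pos.mp hpos
    exact ⟨w, (Finset.mem_filter.mp hw).2⟩
  have hexS : ∀ (w : Fin d.W) (b : Bool), ∃ s, ω.2 w s = b := by
    intro w b
    have hpos : 0 < (Finset.univ.filter fun s => ω.2 w s = b).card := by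
      rw [hcardB w b]; exact hMb_pos w b
    obtain ⟨s, hs⟩ := Finset.card_pos.mp hpos
    exact ⟨s, (Finset.mem_filter.mp hs).2⟩
  have hex : ∀ k : T, ∃ i : d.Idx, d.Z ω i.1 i.2 = k := by
    intro k
    obtain ⟨w, hw⟩ := hexW k.1
    obtain ⟨s, hs⟩ := hexS w k.2
    exact ⟨⟨w, s⟩, by simp [Design.Z, hw, hs]⟩
  have hsig : ∀ g : d.Idx → ℝ, ∑ i : d.Idx, g i = ∑ w, ∑ s, g ⟨w, s⟩ := by
    intro g; rw [← Finset.univ_sigma_univ, Finset.sum_sigma]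
  refine ⟨?_, ?_, ?_⟩
  · -- OLS = sample mean
    have hden : ∀ k : T, (∑ i : d.Idx, if d.Z ω i.1 i.2 = k then (1:ℝ) else 0) ≠ 0 := by
      intro k
      have hpos : 0 < ∑ i : d.Idx, if d.Z ω i.1 i.2 = k then (1:ℝ) else 0 := by
        apply Finset.sum_pos'
        · intro i _; split <;> norm_num
        · obtain ⟨i, hi⟩ := hex k
          exact ⟨i, Finset.mem_univ i, by rw [if_pos hi]; norm_num⟩
      exact hpos.ne'
    have h := lsCoef_indicator (fun i : d.Idx => d.Z ω i.1 i.2) (fun _ => (1:ℝ))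
      (d.Yv ω) hden z
    have hb : d.betaOls ω z = (∑ i : d.Idx, if d.Z ω i.1 i.2 = z then (1:ℝ) else 0)⁻¹ *
        ∑ i : d.Idx, if d.Z ω i.1 i.2 = z then (1:ℝ) * d.Yv ω i else 0 := h
    have e1 : (∑ i : d.Idx, if d.Z ω i.1 i.2 = z then (1:ℝ) else 0)
        = ∑ w, ∑ s, if d.Z ω w s = z then (1:ℝ) else 0 := hsig _
    have e2 : (∑ i : d.Idx, if d.Z ω i.1 i.2 = z then (1:ℝ) * d.Yv ω i else 0)
        = ∑ w, ∑ s, if d.Z ω w s = z then d.Yobs ω w s else 0 := by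
      rw [hsig fun i : d.Idx => if d.Z ω i.1 i.2 = z then (1:ℝ) * d.Yv ω i else 0]
      exact Finset.sum_congr rfl fun w _ => Finset.sum_congr rfl fun s _ => by
        split <;> simp [Design.Yv]
    rw [hb, e1, e2, Design.Ysm, div_eq_inv_mul]
  · -- WLS = Hajek
    have hwpos : ∀ i : d.Idx, 0 < d.wgt ω i := fun i => inv_pos.mpr (hprob i.1 _)
    have hden : ∀ k : T, (∑ i : d.Idx, if d.Z ω i.1 i.2 = k then d.wgt ω i else 0) ≠ 0 := by
      intro k
      have hpos : 0 < ∑ i : d.Idx, if d.Z ω i.1 i.2 = k then d.wgt ω i else 0 := by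
        apply Finset.sum_pos'
        · intro i _; split
          · exact (hwpos i).le
          · exact le_refl 0
        · obtain ⟨i, hi⟩ := hex k
          exact ⟨i, Finset.mem_univ i, by rw [if_pos hi]; exact hwpos i⟩
      exact hpos.ne'
    have h := lsCoef_indicator (fun i : d.Idx => d.Z ω i.1 i.2) (d.wgt ω) (d.Yv ω) hden z
    have hb : d.betaWls ω z = (∑ i : d.Idx, if d.Z ω i.1 i.2 = z then d.wgt ω i else 0)⁻¹ *
        ∑ i : d.Idx, if d.Z ω i.1 i.2 = z then d.wgt ω i * d.Yv ω i else 0 := h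
    have e1 : (∑ i : d.Idx, if d.Z ω i.1 i.2 = z then d.wgt ω i else 0)
        = ∑ w, ∑ s, if d.Z ω w s = z then (d.prob w z)⁻¹ else 0 := by
      rw [hsig fun i : d.Idx => if d.Z ω i.1 i.2 = z then d.wgt ω i else 0]
      refine Finset.sum_congr rfl fun w _ => Finset.sum_congr rfl fun s _ => ?_
      by_cases hc : d.Z ω w s = z
      · rw [if_pos hc, if_pos hc]; simp [Design.wgt, hc]
      · rw [if_neg hc, if_neg hc]
    have e2 : (∑ i : d.Idx, if d.Z ω i.1 i.2 = z then d.wgt ω i * d.Yv ω i else 0)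
        = ∑ w, ∑ s, if d.Z ω w s = z then (d.prob w z)⁻¹ * d.Yobs ω w s else 0 := by
      rw [hsig fun i : d.Idx => if d.Z ω i.1 i.2 = z then d.wgt ω i * d.Yv ω i else 0]
      refine Finset.sum_congr rfl fun w _ => Finset.sum_congr rfl fun s _ => ?_
      by_cases hc : d.Z ω w s = z
      · rw [if_pos hc, if_pos hc]; simp [Design.wgt, Design.Yv, hc]
      · rw [if_neg hc, if_neg hc]
    rw [hb, e1, e2, Design.Yhaj, Design.Yht, Design.oneHt,
      mul_div_mul_left _ _ (inv_ne_zero hN_pos.ne'), div_eq_inv_mul]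
  · -- Aggregate = HT
    have hden : ∀ k : T, (∑ i : d.AgIdx, if (ω.1 i.1, i.2) = k then (1:ℝ) else 0) ≠ 0 := by
      intro k
      have hpos : 0 < ∑ i : d.AgIdx, if (ω.1 i.1, i.2) = k then (1:ℝ) else 0 := by
        apply Finset.sum_pos'
        · intro i _; split <;> norm_num
        · obtain ⟨w, hw⟩ := hexW k.1
          exact ⟨(w, k.2), Finset.mem_univ _, by rw [if_pos (by simp [hw])]; norm_num⟩
      exact hpos.ne'
    have h := lsCoef_indicator (fun i : d.AgIdx => (ω.1 i.1, i.2)) (fun _ => (1:ℝ))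
      (d.Uag ω) hden z
    have hb : d.betaAg ω z = (∑ i : d.AgIdx, if (ω.1 i.1, i.2) = z then (1:ℝ) else 0)⁻¹ *
        ∑ i : d.AgIdx, if (ω.1 i.1, i.2) = z then (1:ℝ) * d.Uag ω i else 0 := h
    have e1 : (∑ i : d.AgIdx, if (ω.1 i.1, i.2) = z then (1:ℝ) else 0) = (d.Wa z.1 : ℝ) := by
      rw [Fintype.sum_prod_type]
      have hbool : ∀ w : Fin d.W, (∑ b : Bool, if (ω.1 w, b) = z then (1:ℝ) else 0)
          = if ω.1 w = z.1 then 1 else 0 := by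
        intro w
        rw [Fintype.sum_bool]
        by_cases hw : ω.1 w = z.1
        · rcases z with ⟨a, b⟩
          cases b <;> simp_all [Prod.ext_iff]
        · simp [Prod.ext_iff, hw]
      rw [Finset.sum_congr rfl fun w _ => hbool w, Finset.sum_boole, hcardA z.1]
    have e2 : (∑ i : d.AgIdx, if (ω.1 i.1, i.2) = z then (1:ℝ) * d.Uag ω i else 0)
        = ∑ w, if ω.1 w = z.1 then d.Uw ω w z else 0 := by
      rw [Fintype.sum_prod_type]
      refine Finset.sum_congr rfl fun w _ => ?_
      rw [Fintype.sum_bool]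
      simp only [Design.Uag]
      by_cases hw : ω.1 w = z.1
      · rw [if_pos hw]
        obtain ⟨a, b⟩ := z
        simp only at hw ⊢
        cases b
        · rw [if_neg (by simp [hw, Prod.ext_iff]), if_pos (by rw [hw]), one_mul, zero_add, hw]
        · rw [if_pos (by rw [hw]), if_neg (by simp [hw, Prod.ext_iff]), one_mul, add_zero, hw]
      · rw [if_neg hw, if_neg (by simp [Prod.ext_iff, hw]),
          if_neg (by simp [Prod.ext_iff, hw]), add_zero]
    have key : ((d.Wa z.1 : ℝ))⁻¹ * (∑ w, if ω.1 w = z.1 then d.Uw ω w z else 0)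
        = d.Yht ω z := by
      rw [Design.Yht, Finset.mul_sum, Finset.mul_sum]
      refine Finset.sum_congr rfl fun w _ => ?_
      by_cases hw : ω.1 w = z.1
      · rw [if_pos hw]
        have hpull : ∀ s : Fin (d.M w),
            (if d.Z ω w s = z then (d.prob w z)⁻¹ * d.Yobs ω w s else 0)
              = (d.prob w z)⁻¹ * (if d.Z ω w s = z then d.Yobs ω w s else 0) := by
          intro s; split <;> simp
        rw [Finset.sum_congr rfl fun s _ => hpull s, ← Finset.mul_sum]
        rw [Design.Uw, Design.Yw, Design.alpha, Design.prob, Design.p, Design.q]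
        have h1 := hW_pos.ne'
        have h2 := (hM_pos w).ne'
        have h3 := hN_pos.ne'
        have h4 := (hWaR z.1).ne'
        have h5 := (hMbR w z.2).ne'
        field_simp
      · rw [if_neg hw, mul_zero, Finset.sum_eq_zero fun s _ =>
          if_neg fun hc => hw (congrArg Prod.fst hc), mul_zero]
    rw [hb, e1, e2]
    exact key

end SplitPlotPaper
end
end
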